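/- arXiv:1008.3213 — 10 statements merged into one kernel-verified Lean document; each statement's English description precedes it below -/
import Mathlib

section
/- Let G be a finite simple graph with a probability weight function μ on its vertices. If every independent set I of G satisfies μ(I) ≤ μ(N(I)), then every subset Q of V(G) satisfies μ(Q) ≤ μ(N(Q)), where N(Q) denotes the set of vertices adjacent to at least one vertex of Q. -/
open Finset Filter

/-- `I` is an independent set of vertices in `G`. -/
def IsIndepSet {V : Type*} (G : SimpleGraph V) (I : Finset V) : Prop :=
  ∀ u ∈ I, ∀ v ∈ I, ¬ G.Adj u v

/-- The neighborhood `N(I)`: vertices adjacent to at least one vertex of `I`. -/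
noncomputable def nbhd {V : Type*} [Fintype V] (G : SimpleGraph V) (I : Finset V) : Finset V :=
  @Finset.filter _ (fun v => ∃ u ∈ I, G.Adj u v) (Classical.decPred _) Finset.univ

/-- Measure of a finite set of vertices: sum of the weights. -/
def fmeas {V : Type*} (μ : V → ℝ) (S : Finset V) : ℝ := ∑ v ∈ S, μ v

/-- The `n`-fold tensor (categorical) power of `G`. -/
def tpow {V : Type*} (G : SimpleGraph V) (n : ℕ) : SimpleGraph (Fin n → V) where
  Adj u v := u ≠ v ∧ ∀ i, G.Adj (u i) (v i)
  symm := ⟨fun u v h => ⟨h.1.symm, fun i => (h.2 i).symm⟩⟩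
  loopless := ⟨fun u h => h.1 rfl⟩

/-- Product measure of a set of `n`-tuples. -/
noncomputable def pmeas {V : Type*} (μ : V → ℝ) (n : ℕ) (S : Finset (Fin n → V)) : ℝ :=
  ∑ x ∈ S, ∏ i, μ (x i)

/-- `ᾱ(G)`: the supremum (= maximum) of the measures of independent sets of `G`. -/
noncomputable def alphaBar {V : Type*} (G : SimpleGraph V) (μ : V → ℝ) : ℝ :=
  sSup {x : ℝ | ∃ I : Finset V, IsIndepSet G I ∧ x = fmeas μ I}

/-- `ᾱ(G^n)` with the product measure. -/
noncomputable def alphaPow {V : Type*} (G : SimpleGraph V) (μ : V → ℝ) (n : ℕ) : ℝ :=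
  alphaBar (tpow G n) (fun x => ∏ i, μ (x i))

theorem stmt_0 {V : Type*} [Fintype V] (G : SimpleGraph V) (μ : V → ℝ)
    (hμ0 : ∀ v, 0 ≤ μ v) (hμ1 : ∑ v, μ v = 1)
    (hI : ∀ I : Finset V, IsIndepSet G I → fmeas μ I ≤ fmeas μ (nbhd G I)) :
    ∀ Q : Finset V, fmeas μ Q ≤ fmeas μ (nbhd G Q) := by
  classical
  intro Q
  set A := Q \ nbhd G Q with hA
  have hmemN : ∀ (S : Finset V) (v : V), v ∈ nbhd G S ↔ ∃ u ∈ S, G.Adj u v := by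
    intro S v
    simp [nbhd]
  have hAind : IsIndepSet G A := by
    intro u hu v hv huv
    rw [hA, Finset.mem_sdiff] at hu hv
    exact hv.2 ((hmemN Q v).2 ⟨u, hu.1, huv⟩)
  have h1 := hI A hAind
  have hQ : fmeas μ Q = fmeas μ A + fmeas μ (Q ∩ nbhd G Q) := by
    unfold fmeas
    rw [← Finset.sum_union]
    · congr 1
      ext v
      simp only [hA, Finset.mem_union, Finset.mem_sdiff, Finset.mem_inter]
      tauto
    · rw [Finset.disjoint_left]
      intro v hv hv2
      rw [hA, Finset.mem_sdiff] at hv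
      exact hv.2 (Finset.mem_inter.1 hv2).2
  have hdisj : Disjoint (nbhd G A) (Q ∩ nbhd G Q) := by
    rw [Finset.disjoint_left]
    intro v hv hv2
    obtain ⟨u, hu, hadj⟩ := (hmemN A v).1 hv
    rw [hA, Finset.mem_sdiff] at hu
    exact hu.2 ((hmemN Q u).2 ⟨v, (Finset.mem_inter.1 hv2).1, hadj.symm⟩)
  have hsub : nbhd G A ∪ (Q ∩ nbhd G Q) ⊆ nbhd G Q := by
    intro v hv
    rcases Finset.mem_union.1 hv with h | h
    · obtain ⟨u, hu, hadj⟩ := (hmemN A v).1 h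
      rw [hA, Finset.mem_sdiff] at hu
      exact (hmemN Q v).2 ⟨u, hu.1, hadj⟩
    · exact (Finset.mem_inter.1 h).2
  have h2 : fmeas μ (nbhd G A) + fmeas μ (Q ∩ nbhd G Q) ≤ fmeas μ (nbhd G Q) := by
    unfold fmeas
    rw [← Finset.sum_union hdisj]
    exact Finset.sum_le_sum_of_subset_of_nonneg hsub (fun v _ _ => hμ0 v)
  linarith
end

section
/- Let G be a finite simple graph with probability weights μ, and suppose there is an independent set I with μ(I) > μ(N(I)). Let U = V(G) \ (I ∪ N(I)) and let m_n denote the maximum μ-measure (product measure) of an independent set in the n-th tensor power G^n. Then m_n ≥ μ(I) + μ(U)·m_{n-1} for all n ≥ 2. -/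
open Finset Filter

lemma alphaSet_finite {V : Type*} [Fintype V] (G : SimpleGraph V) (μ : V → ℝ) :
    {x : ℝ | ∃ I : Finset V, IsIndepSet G I ∧ x = fmeas μ I}.Finite := by
  have : {x : ℝ | ∃ I : Finset V, IsIndepSet G I ∧ x = fmeas μ I} ⊆
      Set.range (fun I : Finset V => fmeas μ I) := by
    rintro x ⟨J, _, rfl⟩; exact ⟨J, rfl⟩
  exact Set.Finite.subset (Set.finite_range _) this

lemma alphaSet_nonempty {V : Type*} (G : SimpleGraph V) (μ : V → ℝ) :
    {x : ℝ | ∃ I : Finset V, IsIndepSet G I ∧ x = fmeas μ I}.Nonempty :=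
  ⟨fmeas μ (∅ : Finset V), ∅, fun u hu => absurd hu (Finset.notMem_empty u), rfl⟩

lemma alphaBar_mem {V : Type*} [Fintype V] (G : SimpleGraph V) (μ : V → ℝ) :
    ∃ J : Finset V, IsIndepSet G J ∧ alphaBar G μ = fmeas μ J :=
  (alphaSet_nonempty G μ).csSup_mem (alphaSet_finite G μ)

lemma alphaBar_ge {V : Type*} [Fintype V] (G : SimpleGraph V) (μ : V → ℝ)
    (J : Finset V) (hJ : IsIndepSet G J) : fmeas μ J ≤ alphaBar G μ :=
  le_csSup ((alphaSet_finite G μ).bddAbove) ⟨J, hJ, rfl⟩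

theorem stmt_1 {V : Type*} [Fintype V] [DecidableEq V] (G : SimpleGraph V) (μ : V → ℝ)
    (hμ0 : ∀ v, 0 ≤ μ v) (hμ1 : ∑ v, μ v = 1)
    (I : Finset V) (hI : IsIndepSet G I)
    (hgt : fmeas μ I > fmeas μ (nbhd G I)) :
    ∀ n : ℕ, 2 ≤ n →
      alphaPow G μ n ≥
        fmeas μ I + fmeas μ (Finset.univ \ (I ∪ nbhd G I)) * alphaPow G μ (n - 1) := by
  intro n hn
  obtain ⟨m, rfl⟩ : ∃ m, n = m + 1 := ⟨n - 1, (Nat.succ_pred_eq_of_pos (by omega)).symm⟩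
  have hm : 1 ≤ m := by omega
  simp only [Nat.add_sub_cancel]
  set U : Finset V := Finset.univ \ (I ∪ nbhd G I) with hU
  obtain ⟨J, hJind, hJeq⟩ := alphaBar_mem (tpow G m) (fun x => ∏ i, μ (x i))
  set S : Finset (V × (Fin m → V)) := I ×ˢ Finset.univ ∪ U ×ˢ J with hS
  set K : Finset (Fin (m + 1) → V) := S.image (fun p => Fin.cons p.1 p.2) with hK
  -- membership facts
  have memS : ∀ p : V × (Fin m → V), p ∈ S ↔ (p.1 ∈ I) ∨ (p.1 ∈ U ∧ p.2 ∈ J) := by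
    intro p
    simp [hS, Finset.mem_union, Finset.mem_product]
  have hIU : ∀ a, a ∈ U → a ∉ I ∧ a ∉ nbhd G I := by
    intro a ha
    simp only [hU, Finset.mem_sdiff, Finset.mem_union] at ha
    exact ⟨fun h => ha.2 (Or.inl h), fun h => ha.2 (Or.inr h)⟩
  -- independence of K
  have hKind : IsIndepSet (tpow G (m + 1)) K := by
    intro u hu v hv hadj
    simp only [hK, Finset.mem_image] at hu hv
    obtain ⟨⟨a, y⟩, ha, rfl⟩ := hu
    obtain ⟨⟨b, z⟩, hb, rfl⟩ := hv
    rw [memS] at ha hb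
    have hab : G.Adj a b := by
      have := hadj.2 0
      simpa using this
    rcases ha with ha | ⟨ha, hy⟩
    · rcases hb with hb | ⟨hb, hz⟩
      · exact hI a ha b hb hab
      · exact (hIU b hb).2 (by simp only [nbhd, Finset.mem_filter]; exact ⟨Finset.mem_univ _, a, ha, hab⟩)
    · rcases hb with hb | ⟨hb, hz⟩
      · exact (hIU a ha).2 (by simp only [nbhd, Finset.mem_filter]; exact ⟨Finset.mem_univ _, b, hb, hab.symm⟩)
      · by_cases hyz : y = z
        · subst hyz
          have := hadj.2 (Fin.succ ⟨0, hm⟩)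
          simp only [Fin.cons_succ] at this
          exact G.irrefl this
        · refine hJind y hy z hz ⟨hyz, fun i => ?_⟩
          have := hadj.2 i.succ
          simpa using this
  -- injectivity of cons
  have hinj : ∀ p ∈ S, ∀ q ∈ S,
      (fun p : V × (Fin m → V) => (Fin.cons p.1 p.2 : Fin (m+1) → V)) p =
      (fun p : V × (Fin m → V) => (Fin.cons p.1 p.2 : Fin (m+1) → V)) q → p = q := by
    rintro ⟨a, y⟩ _ ⟨b, z⟩ _ h
    have h0 : a = b := by
      have := congrFun h 0
      simpa using this
    have h1 : y = z := by
      funext i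
      have := congrFun h i.succ
      simpa using this
    simp [h0, h1]
  -- measure of K
  have hdisj : Disjoint (I ×ˢ (Finset.univ : Finset (Fin m → V))) (U ×ˢ J) := by
    rw [Finset.disjoint_left]
    rintro ⟨a, y⟩ ha hb
    rw [Finset.mem_product] at ha hb
    exact (hIU a hb.1).1 ha.1
  have hsum1 : ∑ y : Fin m → V, ∏ i, μ (y i) = 1 := by
    rw [← Fintype.sum_pow, hμ1, one_pow]
  have hmeasK : pmeas μ (m + 1) K = fmeas μ I + fmeas μ U * pmeas μ m J := by
    rw [pmeas, hK, Finset.sum_image hinj]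
    have hterm : ∀ p : V × (Fin m → V),
        (∏ i : Fin (m+1), μ ((Fin.cons p.1 p.2 : Fin (m+1) → V) i)) = μ p.1 * ∏ i, μ (p.2 i) := by
      intro p
      rw [Fin.prod_univ_succ]
      simp
    simp only [hterm]
    rw [hS, Finset.sum_union hdisj, Finset.sum_product, Finset.sum_product]
    simp only [← Finset.sum_mul, ← Finset.mul_sum]
    rw [hsum1, mul_one]
    rfl
  have hle : pmeas μ (m + 1) K ≤ alphaPow G μ (m + 1) :=
    alphaBar_ge (tpow G (m + 1)) (fun x => ∏ i, μ (x i)) K hKind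
  have : alphaPow G μ m = pmeas μ m J := hJeq
  rw [this, ← hmeasK]
  exact hle
end

section
/- Let G be a finite simple graph with probability weights μ. If there exists an independent set I with μ(I) > μ(N(I)), then the limit as n → ∞ of the maximum product-measure of an independent set in G^n equals 1. -/
open Finset Filter

lemma sum_prod_pi {V : Type*} [Fintype V] (n : ℕ) (g : Fin n → V → ℝ) :
    ∑ x : Fin n → V, ∏ i, g i (x i) = ∏ i, ∑ v, g i v := by
  rw [Finset.prod_univ_sum, Fintype.piFinset_univ]

lemma exp_single {V : Type*} [Fintype V] (μ : V → ℝ) (hμ1 : ∑ v, μ v = 1)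
    {n : ℕ} (g : V → ℝ) (i : Fin n) :
    ∑ x : Fin n → V, (∏ k, μ (x k)) * g (x i) = ∑ v, μ v * g v := by
  have h1 : ∀ x : Fin n → V, (∏ k, μ (x k)) * g (x i)
      = ∏ k, (μ (x k) * if k = i then g (x k) else 1) := by
    intro x
    rw [Finset.prod_mul_distrib, Finset.prod_ite_eq' univ i (fun k => g (x k))]
    simp
  simp_rw [h1]
  rw [sum_prod_pi n (fun k v => μ v * if k = i then g v else 1)]
  have h2 : ∀ k : Fin n, (∑ v, μ v * if k = i then g v else 1)
      = if k = i then ∑ v, μ v * g v else 1 := by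
    intro k; split <;> simp [hμ1]
  rw [Finset.prod_congr rfl (fun k _ => h2 k), Finset.prod_ite_eq' univ i]
  simp

lemma exp_pair {V : Type*} [Fintype V] (μ : V → ℝ) (hμ1 : ∑ v, μ v = 1)
    {n : ℕ} (g : V → ℝ) (i j : Fin n) (hij : i ≠ j) :
    ∑ x : Fin n → V, (∏ k, μ (x k)) * (g (x i) * g (x j)) = (∑ v, μ v * g v) ^ 2 := by
  have h1 : ∀ x : Fin n → V, (∏ k, μ (x k)) * (g (x i) * g (x j))
      = ∏ k, (μ (x k) * ((if k = i then g (x k) else 1) * (if k = j then g (x k) else 1))) := by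
    intro x
    rw [Finset.prod_mul_distrib, Finset.prod_mul_distrib,
      Finset.prod_ite_eq' univ i (fun k => g (x k)), Finset.prod_ite_eq' univ j (fun k => g (x k))]
    simp
  simp_rw [h1]
  rw [sum_prod_pi n (fun k v => μ v * ((if k = i then g v else 1) * (if k = j then g v else 1)))]
  have h2 : ∀ k : Fin n, (∑ v, μ v * ((if k = i then g v else 1) * (if k = j then g v else 1)))
      = (if k = i then ∑ v, μ v * g v else 1) * (if k = j then ∑ v, μ v * g v else 1) := by
    intro k
    rcases eq_or_ne k i with rfl | hki
    · simp [hij, hμ1]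
    · rcases eq_or_ne k j with rfl | hkj
      · simp [hki, hμ1]
      · simp [hki, hkj, hμ1]
  rw [Finset.prod_congr rfl (fun k _ => h2 k), Finset.prod_mul_distrib,
    Finset.prod_ite_eq' univ i, Finset.prod_ite_eq' univ j]
  simp [sq]

lemma exp_one {V : Type*} [Fintype V] (μ : V → ℝ) (hμ1 : ∑ v, μ v = 1) (n : ℕ) :
    ∑ x : Fin n → V, ∏ k, μ (x k) = 1 := by
  rw [sum_prod_pi n (fun _ v => μ v)]
  simp [hμ1]

lemma cheb {V : Type*} [Fintype V] (μ : V → ℝ) (hμ0 : ∀ v, 0 ≤ μ v) (hμ1 : ∑ v, μ v = 1)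
    (g : V → ℝ) (hm0 : 0 < ∑ v, μ v * g v) {n : ℕ} (hn : 1 ≤ n) :
    1 - (∑ v, μ v * (g v * g v)) / (n * (∑ v, μ v * g v) ^ 2)
      ≤ ∑ x ∈ Finset.filter (fun x : Fin n → V => 0 < ∑ i, g (x i)) Finset.univ,
          ∏ k, μ (x k) := by
  set m : ℝ := ∑ v, μ v * g v with hm
  set C : ℝ := ∑ v, μ v * (g v * g v) with hC
  set w : (Fin n → V) → ℝ := fun x => ∏ k, μ (x k) with hw
  have hwpos : ∀ x, 0 ≤ w x := fun x => Finset.prod_nonneg (fun k _ => hμ0 _)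
  set T : (Fin n → V) → ℝ := fun x => ∑ i, g (x i) with hT
  have hnpos : (0:ℝ) < n := by exact_mod_cast hn
  -- E1
  have E1 : ∑ x : Fin n → V, w x * T x = n * m := by
    simp_rw [hT, Finset.mul_sum]
    rw [Finset.sum_comm]
    rw [Finset.sum_congr rfl (fun i _ => exp_single μ hμ1 g i)]
    simp [mul_comm]
    exact Or.inl rfl
  -- E2
  have E2 : ∑ x : Fin n → V, w x * (T x * T x) = n * C + ((n:ℝ) * n - n) * m ^ 2 := by
    have expand : ∀ x, w x * (T x * T x) = ∑ i, ∑ j, w x * (g (x i) * g (x j)) := by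
      intro x
      simp_rw [hT, Finset.sum_mul_sum, Finset.mul_sum]
    simp_rw [expand]
    rw [Finset.sum_comm]
    have inner : ∀ i : Fin n, ∑ j : Fin n, ∑ x : Fin n → V, w x * (g (x i) * g (x j))
        = C + ((n:ℝ) - 1) * m ^ 2 := by
      intro i
      have : ∀ j : Fin n, (∑ x : Fin n → V, w x * (g (x i) * g (x j)))
          = if j = i then C else m ^ 2 := by
        intro j
        rcases eq_or_ne j i with rfl | hji
        · rw [if_pos rfl, hC]
          exact exp_single μ hμ1 (fun v => g v * g v) j
        · rw [if_neg hji]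
          exact exp_pair μ hμ1 g i j (Ne.symm hji)
      rw [Finset.sum_congr rfl (fun j _ => this j)]
      have h4 : ∀ j : Fin n, (if j = i then C else m^2) = m^2 + (if j = i then C - m^2 else 0) := by
        intro j; split <;> ring
      rw [Finset.sum_congr rfl (fun j _ => h4 j), Finset.sum_add_distrib,
        Finset.sum_ite_eq' univ i (fun _ => C - m^2)]
      simp
      ring
    have inner2 : ∀ i : Fin n, ∑ x : Fin n → V, ∑ j : Fin n, w x * (g (x i) * g (x j))
        = C + ((n:ℝ) - 1) * m ^ 2 := by
      intro i; rw [Finset.sum_comm]; exact inner i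
    rw [Finset.sum_congr rfl (fun i _ => inner2 i)]
    simp
    ring
  have hw1 : ∑ x : Fin n → V, w x = 1 := exp_one μ hμ1 n
  -- variance
  have Var : ∑ x : Fin n → V, w x * (T x - n * m) ^ 2 = n * C - n * m ^ 2 := by
    have : ∀ x, w x * (T x - n * m) ^ 2
        = w x * (T x * T x) - (2 * (n * m)) * (w x * T x) + (n*m)^2 * w x := by
      intro x; ring
    simp_rw [this]
    rw [Finset.sum_add_distrib, Finset.sum_sub_distrib, ← Finset.mul_sum, ← Finset.mul_sum,
      E1, E2, hw1]
    ring
  -- Chebyshev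
  set B := Finset.filter (fun x : Fin n → V => ¬ 0 < T x) Finset.univ with hB
  have hBle : ∑ x ∈ B, w x ≤ C / (n * m ^ 2) := by
    have key : (n*m)^2 * ∑ x ∈ B, w x ≤ n * C := by
      have h1 : ∀ x ∈ B, (n*m)^2 * w x ≤ w x * (T x - n*m)^2 := by
        intro x hx
        have hTx : ¬ 0 < T x := (Finset.mem_filter.mp hx).2
        push_neg at hTx
        have h2 : ((n:ℝ)*m)^2 ≤ (T x - n*m)^2 := by
          have h3 : (T x - n*m)^2 = (n*m - T x)^2 := by ring
          rw [h3]
          have : (0:ℝ) ≤ n*m := by positivity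
          nlinarith
        nlinarith [hwpos x]
      calc (n*m)^2 * ∑ x ∈ B, w x = ∑ x ∈ B, (n*m)^2 * w x := by rw [Finset.mul_sum]
        _ ≤ ∑ x ∈ B, w x * (T x - n*m)^2 := Finset.sum_le_sum h1
        _ ≤ ∑ x : Fin n → V, w x * (T x - n*m)^2 := by
            apply Finset.sum_le_sum_of_subset_of_nonneg (Finset.filter_subset _ _)
            intro x _ _; exact mul_nonneg (hwpos x) (sq_nonneg _)
        _ = n * C - n * m ^ 2 := Var
        _ ≤ n * C := by nlinarith
    have hpos : (0:ℝ) < ((n:ℝ)*m)^2 := by positivity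
    calc ∑ x ∈ B, w x ≤ n * C / (n*m)^2 := by
            rw [le_div_iff₀ hpos]; linarith [key]
        _ = C / (n * m^2) := by
            rw [div_eq_div_iff hpos.ne' (show ((n:ℝ) * m^2) ≠ 0 by positivity)]; ring
  have hsplit : (∑ x ∈ Finset.filter (fun x : Fin n → V => 0 < T x) Finset.univ, w x)
      + ∑ x ∈ B, w x = 1 := by
    rw [hB, Finset.sum_filter_add_sum_filter_not, hw1]
  linarith


lemma indep_le_one {V : Type*} [Fintype V] (μ : V → ℝ) (hμ0 : ∀ v, 0 ≤ μ v)
    (hμ1 : ∑ v, μ v = 1) {n : ℕ} (J : Finset (Fin n → V)) :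
    pmeas μ n J ≤ 1 := by
  rw [pmeas, ← exp_one μ hμ1 n]
  apply Finset.sum_le_sum_of_subset_of_nonneg (Finset.subset_univ J)
  intro x _ _
  exact Finset.prod_nonneg (fun k _ => hμ0 _)

theorem stmt_2 {V : Type*} [Fintype V] (G : SimpleGraph V) (μ : V → ℝ)
    (hμ0 : ∀ v, 0 ≤ μ v) (hμ1 : ∑ v, μ v = 1)
    (hI : ∃ I : Finset V, IsIndepSet G I ∧ fmeas μ I > fmeas μ (nbhd G I)) :
    Tendsto (fun n => alphaPow G μ n) atTop (nhds 1) := by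
  classical
  obtain ⟨I, hind, hgt⟩ := hI
  set g : V → ℝ := fun v => (if v ∈ I then (1:ℝ) else 0) - (if v ∈ nbhd G I then 1 else 0)
    with hg
  have hm : ∑ v, μ v * g v = fmeas μ I - fmeas μ (nbhd G I) := by
    simp_rw [hg, mul_sub, Finset.sum_sub_distrib, mul_ite, mul_one, mul_zero]
    rw [Finset.sum_ite_mem, Finset.sum_ite_mem, Finset.univ_inter, Finset.univ_inter]
    rfl
  have hm0 : 0 < ∑ v, μ v * g v := by rw [hm]; linarith [hgt]
  set C : ℝ := ∑ v, μ v * (g v * g v) with hC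
  -- the independent set in the power graph
  set S : ∀ n : ℕ, Finset (Fin n → V) :=
    fun n => Finset.filter (fun x : Fin n → V => 0 < ∑ i, g (x i)) Finset.univ with hS
  have hSind : ∀ n, IsIndepSet (tpow G n) (S n) := by
    intro n x hx y hy hadj
    have hx' : 0 < ∑ i, g (x i) := (Finset.mem_filter.mp hx).2
    have hy' : 0 < ∑ i, g (y i) := (Finset.mem_filter.mp hy).2
    have hsum : ∀ z : Fin n → V, ∑ i, g (z i)
        = ((Finset.filter (fun i => z i ∈ I) Finset.univ).card : ℝ)
          - ((Finset.filter (fun i => z i ∈ nbhd G I) Finset.univ).card : ℝ) := by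
      intro z
      simp_rw [hg, Finset.sum_sub_distrib, Finset.sum_boole]
    have hax : ((Finset.filter (fun i => x i ∈ nbhd G I) Finset.univ).card : ℝ)
        < ((Finset.filter (fun i => x i ∈ I) Finset.univ).card : ℝ) := by
      rw [hsum x] at hx'; linarith
    have hay : ((Finset.filter (fun i => y i ∈ nbhd G I) Finset.univ).card : ℝ)
        < ((Finset.filter (fun i => y i ∈ I) Finset.univ).card : ℝ) := by
      rw [hsum y] at hy'; linarith
    have hxy : (Finset.filter (fun i => x i ∈ I) Finset.univ)
        ⊆ (Finset.filter (fun i => y i ∈ nbhd G I) Finset.univ) := by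
      intro i hi
      simp only [Finset.mem_filter, Finset.mem_univ, true_and] at hi ⊢
      simp only [nbhd, Finset.mem_filter, Finset.mem_univ, true_and]
      exact ⟨x i, hi, (hadj : x ≠ y ∧ ∀ i, G.Adj (x i) (y i)).2 i⟩
    have hyx : (Finset.filter (fun i => y i ∈ I) Finset.univ)
        ⊆ (Finset.filter (fun i => x i ∈ nbhd G I) Finset.univ) := by
      intro i hi
      simp only [Finset.mem_filter, Finset.mem_univ, true_and] at hi ⊢
      simp only [nbhd, Finset.mem_filter, Finset.mem_univ, true_and]
      exact ⟨y i, hi, ((hadj : x ≠ y ∧ ∀ i, G.Adj (x i) (y i)).2 i).symm⟩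
    have h1 := Finset.card_le_card hxy
    have h2 := Finset.card_le_card hyx
    have h1' : ((Finset.filter (fun i => x i ∈ I) Finset.univ).card : ℝ)
        ≤ ((Finset.filter (fun i => y i ∈ nbhd G I) Finset.univ).card : ℝ) := by
      exact_mod_cast h1
    have h2' : ((Finset.filter (fun i => y i ∈ I) Finset.univ).card : ℝ)
        ≤ ((Finset.filter (fun i => x i ∈ nbhd G I) Finset.univ).card : ℝ) := by
      exact_mod_cast h2
    linarith
  -- upper bound
  have hub : ∀ n, alphaPow G μ n ≤ 1 := by
    intro n
    apply Real.sSup_le _ zero_le_one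
    rintro x ⟨J, _, rfl⟩
    exact indep_le_one μ hμ0 hμ1 J
  -- lower bound
  have hbdd : ∀ n, BddAbove {x : ℝ | ∃ J : Finset (Fin n → V),
      IsIndepSet (tpow G n) J ∧ x = fmeas (fun x => ∏ i, μ (x i)) J} := by
    intro n
    refine ⟨1, ?_⟩
    rintro x ⟨J, _, rfl⟩
    exact indep_le_one μ hμ0 hμ1 J
  have hlb : ∀ n : ℕ, 1 ≤ n → 1 - C / (n * (∑ v, μ v * g v) ^ 2) ≤ alphaPow G μ n := by
    intro n hn
    have hmem : pmeas μ n (S n) ∈ {x : ℝ | ∃ J : Finset (Fin n → V),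
        IsIndepSet (tpow G n) J ∧ x = fmeas (fun x => ∏ i, μ (x i)) J} :=
      ⟨S n, hSind n, rfl⟩
    have hle := le_csSup (hbdd n) hmem
    have hcheb := cheb μ hμ0 hμ1 g hm0 hn
    calc 1 - C / (n * (∑ v, μ v * g v) ^ 2) ≤ pmeas μ n (S n) := hcheb
      _ ≤ alphaPow G μ n := hle
  -- squeeze
  have htend : Tendsto (fun n : ℕ => 1 - C / (n * (∑ v, μ v * g v) ^ 2)) atTop (nhds 1) := by
    have h0 : Tendsto (fun n : ℕ => (C / (∑ v, μ v * g v) ^ 2) / (n : ℝ)) atTop (nhds 0) :=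
      tendsto_const_div_atTop_nhds_zero_nat _
    have heq : ∀ n : ℕ, C / (n * (∑ v, μ v * g v) ^ 2)
        = (C / (∑ v, μ v * g v) ^ 2) / (n : ℝ) := by
      intro n; rw [div_div, mul_comm ((n:ℝ))]
    simp_rw [heq]
    have := tendsto_const_nhds (x := (1:ℝ)) (f := atTop (α := ℕ)) |>.sub h0
    simpa using this
  apply tendsto_of_tendsto_of_tendsto_of_le_of_le' htend tendsto_const_nhds
  · filter_upwards [eventually_ge_atTop 1] with n hn using hlb n hn
  · filter_upwards with n using hub n
end

section
/- Let G be a finite simple graph with probability weights μ, and let ᾱ(G^n) denote the maximum product measure of an independent set in the n-th tensor power G^n. If lim_{n→∞} ᾱ(G^n) > 1/2, then lim_{n→∞} ᾱ(G^n) = 1. -/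
open Finset Filter

section aux

variable {V : Type*} [Fintype V]

lemma pmeas_le_one (μ : V → ℝ) (hμ0 : ∀ v, 0 ≤ μ v) (hμ1 : ∑ v, μ v = 1) (m : ℕ)
    (S : Finset (Fin m → V)) : pmeas μ m S ≤ 1 := by
  calc pmeas μ m S ≤ ∑ x : Fin m → V, ∏ i, μ (x i) :=
        Finset.sum_le_sum_of_subset_of_nonneg (Finset.subset_univ _)
          (fun x _ _ => Finset.prod_nonneg fun i _ => hμ0 _)
    _ = 1 := by rw [← Fintype.sum_pow, hμ1, one_pow]

lemma fmeas_eq_pmeas (μ : V → ℝ) (m : ℕ) (S : Finset (Fin m → V)) :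
    fmeas (fun x => ∏ i, μ (x i)) S = pmeas μ m S := rfl

lemma bdd_alphaSet (G : SimpleGraph V) (μ : V → ℝ) (hμ0 : ∀ v, 0 ≤ μ v) (hμ1 : ∑ v, μ v = 1)
    (m : ℕ) :
    BddAbove {x : ℝ | ∃ I : Finset (Fin m → V),
      IsIndepSet (tpow G m) I ∧ x = fmeas (fun x => ∏ i, μ (x i)) I} := by
  refine ⟨1, fun x hx => ?_⟩
  obtain ⟨I, _, rfl⟩ := hx
  rw [fmeas_eq_pmeas]
  exact pmeas_le_one μ hμ0 hμ1 m I

lemma le_alphaPow (G : SimpleGraph V) (μ : V → ℝ) (hμ0 : ∀ v, 0 ≤ μ v) (hμ1 : ∑ v, μ v = 1)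
    (m : ℕ) (I : Finset (Fin m → V)) (hI : IsIndepSet (tpow G m) I) :
    pmeas μ m I ≤ alphaPow G μ m :=
  le_csSup (bdd_alphaSet G μ hμ0 hμ1 m) ⟨I, hI, rfl⟩

lemma alphaPow_le_one (G : SimpleGraph V) (μ : V → ℝ) (hμ0 : ∀ v, 0 ≤ μ v)
    (hμ1 : ∑ v, μ v = 1) (m : ℕ) : alphaPow G μ m ≤ 1 := by
  refine csSup_le ⟨0, ∅, fun u hu => absurd hu (Finset.notMem_empty u), by simp [fmeas]⟩ ?_
  rintro x ⟨I, _, rfl⟩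
  rw [fmeas_eq_pmeas]
  exact pmeas_le_one μ hμ0 hμ1 m I

lemma key_bound (G : SimpleGraph V) (μ : V → ℝ) (hμ0 : ∀ v, 0 ≤ μ v) (hμ1 : ∑ v, μ v = 1)
    (n : ℕ) (hn : 1 ≤ n) (I : Finset (Fin n → V)) (hI : IsIndepSet (tpow G n) I)
    (hp : 1 / 2 < pmeas μ n I) (t : ℕ) (ht : 1 ≤ t) :
    1 - (4 * pmeas μ n I * (1 - pmeas μ n I)) ^ t ≤ alphaPow G μ (2 * t * n) := by
  classical
  set k := 2 * t with hk
  set p := pmeas μ n I with hpdef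
  set q := 1 - p with hqdef
  set w : (Fin n → V) → ℝ := fun z => ∏ i, μ (z i) with hwdef
  have hw0 : ∀ z : Fin n → V, 0 ≤ w z := fun z => Finset.prod_nonneg fun i _ => hμ0 _
  have hw1 : ∑ z, w z = 1 := by
    rw [hwdef, ← Fintype.sum_pow, hμ1, one_pow]
  have hpI : p = ∑ z ∈ I, w z := rfl
  have hp1 : p ≤ 1 := pmeas_le_one μ hμ0 hμ1 n I
  have hq0 : 0 ≤ q := by simp [hqdef]; linarith
  have hp0 : 0 < p := lt_trans (by norm_num) hp
  -- the block decomposition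
  let e : Fin k × Fin n ≃ Fin (k * n) := finProdFinEquiv
  let blk : (Fin (k * n) → V) → (Fin k → (Fin n → V)) := fun x j i => x (e (j, i))
  let J : Finset (Fin (k * n) → V) :=
    Finset.univ.filter fun x => t < (Finset.univ.filter fun j => blk x j ∈ I).card
  let good : Finset (Fin k → (Fin n → V)) :=
    Finset.univ.filter fun y => t < (Finset.univ.filter fun j => y j ∈ I).card
  -- independence of J
  have hJindep : IsIndepSet (tpow G (k * n)) J := by
    intro x hx y hy hadj
    simp only [J, Finset.mem_filter] at hx hy
    obtain ⟨j, hjx, hjy⟩ : ∃ j, blk x j ∈ I ∧ blk y j ∈ I := by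
      by_contra hcon
      push_neg at hcon
      have hdisj : (Finset.univ.filter fun j => blk x j ∈ I) ∩
          (Finset.univ.filter fun j => blk y j ∈ I) = ∅ := by
        ext j; simp only [Finset.mem_inter, Finset.mem_filter, Finset.mem_univ, true_and,
          Finset.notMem_empty, iff_false]
        rintro ⟨h1, h2⟩; exact hcon j h1 h2
      have := Finset.card_union_add_card_inter (Finset.univ.filter fun j => blk x j ∈ I)
        (Finset.univ.filter fun j => blk y j ∈ I)
      rw [hdisj] at this
      have hle : ((Finset.univ.filter fun j => blk x j ∈ I) ∪
          (Finset.univ.filter fun j => blk y j ∈ I)).card ≤ k := by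
        have h := Finset.card_le_univ ((Finset.univ.filter fun j => blk x j ∈ I) ∪
          (Finset.univ.filter fun j => blk y j ∈ I))
        simpa using h
      simp at this
      omega
    have hne : blk x j ≠ blk y j := by
      intro heq
      have hi : G.Adj (x (e (j, ⟨0, hn⟩))) (y (e (j, ⟨0, hn⟩))) := hadj.2 _
      have : x (e (j, ⟨0, hn⟩)) = y (e (j, ⟨0, hn⟩)) := congrFun heq ⟨0, hn⟩
      rw [this] at hi
      exact G.irrefl hi
    exact hI _ hjx _ hjy ⟨hne, fun i => hadj.2 (e (j, i))⟩
  -- the measure of J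
  have hblk : ∀ x : Fin (k * n) → V, (∏ m, μ (x m)) = ∏ j, w (blk x j) := by
    intro x
    rw [← Equiv.prod_comp e (fun m => μ (x m)), Fintype.prod_prod_type]
  have hmeas : pmeas μ (k * n) J = ∑ y ∈ good, ∏ j, w (y j) := by
    unfold pmeas
    rw [Finset.sum_congr rfl fun x _ => hblk x]
    refine Finset.sum_nbij' (i := fun x => blk x)
      (j := fun y m => y (e.symm m).1 (e.symm m).2) ?_ ?_ ?_ ?_ ?_
    · intro x hx
      simp only [J, good, Finset.mem_filter, Finset.mem_univ, true_and] at hx ⊢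
      exact hx
    · intro y hy
      simp only [J, good, Finset.mem_filter, Finset.mem_univ, true_and] at hy ⊢
      have : blk (fun m => y (e.symm m).1 (e.symm m).2) = y := by
        funext j i
        simp [blk, Equiv.symm_apply_apply]
      rw [this]
      exact hy
    · intro x hx
      funext m
      simp [blk, Equiv.apply_symm_apply]
    · intro y hy
      funext j i
      simp [blk, Equiv.symm_apply_apply]
    · intro x hx
      rfl
  -- split total sum into good and bad
  set bad : Finset (Fin k → (Fin n → V)) :=
    Finset.univ.filter fun y => ¬ t < (Finset.univ.filter fun j => y j ∈ I).card with hbaddef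
  have hsplit : (∑ y ∈ good, ∏ j, w (y j)) + (∑ y ∈ bad, ∏ j, w (y j)) = 1 := by
    rw [Finset.sum_filter_add_sum_filter_not]
    rw [← Fintype.sum_pow w k, hw1, one_pow]
  set Q := ∑ y ∈ bad, ∏ j, w (y j) with hQdef
  -- bound Q
  have hbadmem : ∀ y ∈ bad, (Finset.univ.filter fun j => y j ∈ I).card ≤ t := by
    intro y hy
    simp only [bad, Finset.mem_filter, Finset.mem_univ, true_and, not_lt] at hy
    exact hy
  have hQle : Q ≤ (4 * p * q) ^ t := by
    by_cases hq : q = 0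
    · have hQ0 : Q = 0 := by
        rw [hQdef]
        refine Finset.sum_eq_zero fun y hy => ?_
        have hcard := hbadmem y hy
        obtain ⟨j, hj⟩ : ∃ j : Fin k, y j ∉ I := by
          by_contra hcon
          push_neg at hcon
          have : (Finset.univ.filter fun j => y j ∈ I) = Finset.univ :=
            Finset.filter_true_of_mem fun j _ => hcon j
          rw [this, Finset.card_univ, Fintype.card_fin] at hcard
          omega
        refine Finset.prod_eq_zero (Finset.mem_univ j) ?_
        have h1 : w (y j) ≤ ∑ z ∈ Iᶜ, w z :=
          Finset.single_le_sum (fun z _ => hw0 z) (Finset.mem_compl.mpr hj)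
        have h2 : (∑ z ∈ Iᶜ, w z) = q := by
          have := Finset.sum_add_sum_compl I w
          rw [hw1, ← hpI] at this
          linarith
        have := hw0 (y j)
        rw [h2, hq] at h1
        linarith
      rw [hQ0, hq, mul_zero]
      rw [zero_pow (by omega)]
    · have hq0' : 0 < q := lt_of_le_of_ne hq0 (Ne.symm hq)
      set r := Real.sqrt (p / q) with hrdef
      have hpq1 : 1 ≤ p / q := by
        rw [le_div_iff₀ hq0']
        simp [hqdef]; linarith
      have hr1 : 1 ≤ r := by
        rw [hrdef, show (1:ℝ) = Real.sqrt 1 by simp]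
        exact Real.sqrt_le_sqrt hpq1
      have hr0 : 0 < r := lt_of_lt_of_le one_pos hr1
      have hr2 : r ^ 2 = p / q := Real.sq_sqrt (by positivity)
      set g : (Fin n → V) → ℝ := fun z => if z ∈ I then r⁻¹ else r with hgdef
      have hg0 : ∀ z : Fin n → V, 0 ≤ g z := by
        intro z; rw [hgdef]; dsimp only
        split <;> positivity
      have hg1 : ∀ y ∈ bad, 1 ≤ ∏ j, g (y j) := by
        intro y hy
        have hcard := hbadmem y hy
        set m := (Finset.univ.filter fun j => y j ∈ I).card with hmdef
        have hsplit2 : (∏ j, g (y j)) = r⁻¹ ^ m * r ^ (k - m) := by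
          rw [← Finset.prod_filter_mul_prod_filter_not Finset.univ (fun j => y j ∈ I)]
          congr 1
          · rw [Finset.prod_congr rfl (fun j hj => ?_), Finset.prod_const]
            simp only [Finset.mem_filter] at hj
            simp [hgdef, hj.2]
          · rw [Finset.prod_congr rfl (fun j hj => ?_), Finset.prod_const]
            · congr 1
              have := Finset.card_filter_add_card_filter_not
                (s := Finset.univ) (p := fun j : Fin k => y j ∈ I)
              simp only [Finset.card_univ, Fintype.card_fin] at this
              omega
            · simp only [Finset.mem_filter] at hj
              simp [hgdef, hj.2]
        rw [hsplit2]
        have hmt : m ≤ t := hcard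
        have h1 : r⁻¹ ^ t ≤ r⁻¹ ^ m :=
          pow_le_pow_of_le_one (by positivity) (inv_le_one_of_one_le₀ hr1) hmt
        have h2 : r ^ t ≤ r ^ (k - m) :=
          pow_le_pow_right₀ hr1 (by omega)
        calc (1:ℝ) = r⁻¹ ^ t * r ^ t := by
              rw [← mul_pow, inv_mul_cancel₀ (ne_of_gt hr0), one_pow]
          _ ≤ r⁻¹ ^ m * r ^ (k - m) :=
              mul_le_mul h1 h2 (by positivity) (by positivity)
      have step1 : Q ≤ ∑ y : Fin k → (Fin n → V), ∏ j, w (y j) * g (y j) := by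
        calc Q ≤ ∑ y ∈ bad, ∏ j, w (y j) * g (y j) := by
              refine Finset.sum_le_sum fun y hy => ?_
              rw [Finset.prod_mul_distrib]
              exact le_mul_of_one_le_right (Finset.prod_nonneg fun j _ => hw0 _) (hg1 y hy)
          _ ≤ ∑ y : Fin k → (Fin n → V), ∏ j, w (y j) * g (y j) :=
              Finset.sum_le_sum_of_subset_of_nonneg (Finset.subset_univ _)
                (fun y _ _ => Finset.prod_nonneg fun j _ => mul_nonneg (hw0 _) (hg0 _))
      have step2 : (∑ y : Fin k → (Fin n → V), ∏ j, w (y j) * g (y j))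
          = (∑ z, w z * g z) ^ k := (Fintype.sum_pow (fun z => w z * g z) k).symm
      have step3 : (∑ z, w z * g z) = p * r⁻¹ + q * r := by
        rw [← Finset.sum_add_sum_compl I (fun z => w z * g z)]
        congr 1
        · rw [Finset.sum_congr rfl (fun z hz => ?_), ← Finset.sum_mul, ← hpI]
          simp [hgdef, hz]
        · rw [Finset.sum_congr rfl (fun z hz => ?_), ← Finset.sum_mul]
          · congr 1
            have := Finset.sum_add_sum_compl I w
            rw [hw1, ← hpI] at this
            linarith
          · rw [Finset.mem_compl] at hz
            simp [hgdef, hz]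
      have step4 : (p * r⁻¹ + q * r) ^ 2 = 4 * p * q := by
        have hrr : r * r = p / q := by rw [← sq]; exact hr2
        have hx : q * (r * r) = p := by
          rw [hrr, mul_comm, div_mul_cancel₀ _ (ne_of_gt hq0')]
        field_simp
        linear_combination (q * r * r - p) * hx
      calc Q ≤ (∑ z, w z * g z) ^ k := by rw [← step2]; exact step1
        _ = ((p * r⁻¹ + q * r) ^ 2) ^ t := by rw [step3, ← pow_mul, hk]
        _ = (4 * p * q) ^ t := by rw [step4]
  -- combine
  have hfinal : 1 - (4 * p * q) ^ t ≤ pmeas μ (k * n) J := by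
    rw [hmeas]
    have := hsplit
    linarith
  have := le_alphaPow G μ hμ0 hμ1 (k * n) J hJindep
  calc 1 - (4 * p * q) ^ t ≤ pmeas μ (k * n) J := hfinal
    _ ≤ alphaPow G μ (2 * t * n) := this

end aux

theorem stmt_3 {V : Type*} [Fintype V] (G : SimpleGraph V) (μ : V → ℝ)
    (hμ0 : ∀ v, 0 ≤ μ v) (hμ1 : ∑ v, μ v = 1)
    (L : ℝ) (hL : Tendsto (fun n => alphaPow G μ n) atTop (nhds L))
    (hgt : 1 / 2 < L) : L = 1 := by
  classical
  have hle : L ≤ 1 :=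
    le_of_tendsto hL (Filter.Eventually.of_forall fun m => alphaPow_le_one G μ hμ0 hμ1 m)
  have hev : ∀ᶠ m in atTop, 1 / 2 < alphaPow G μ m := hL.eventually (eventually_gt_nhds hgt)
  obtain ⟨n, hn1, hna⟩ := ((eventually_ge_atTop 1).and hev).exists
  have hne : {x : ℝ | ∃ I : Finset (Fin n → V), IsIndepSet (tpow G n) I ∧
      x = fmeas (fun x => ∏ i, μ (x i)) I}.Nonempty :=
    ⟨0, ∅, fun u hu => absurd hu (Finset.notMem_empty u), by simp [fmeas]⟩
  obtain ⟨x, hxmem, hx⟩ := exists_lt_of_lt_csSup hne hna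
  obtain ⟨I, hIindep, rfl⟩ := hxmem
  rw [fmeas_eq_pmeas] at hx
  set p := pmeas μ n I with hpdef
  have hp1 : p ≤ 1 := pmeas_le_one μ hμ0 hμ1 n I
  set c := 4 * p * (1 - p) with hcdef
  have hc0 : 0 ≤ c := by nlinarith
  have hc1 : c < 1 := by nlinarith
  have hsub : Tendsto (fun t => alphaPow G μ (2 * t * n)) atTop (nhds L) := by
    apply hL.comp
    refine tendsto_atTop_mono (f := id) (fun t => ?_) tendsto_id
    have h := Nat.mul_le_mul_left (2 * t) hn1
    simp only [mul_one] at h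
    simp only [id_eq]
    omega
  have hlim2 : Tendsto (fun t : ℕ => 1 - c ^ t) atTop (nhds 1) := by
    have h := tendsto_pow_atTop_nhds_zero_of_lt_one hc0 hc1
    have := tendsto_const_nhds (x := (1:ℝ)) (f := atTop (α := ℕ))
    simpa using this.sub h
  have h1L : (1 : ℝ) ≤ L := by
    refine le_of_tendsto_of_tendsto hlim2 hsub ?_
    filter_upwards [eventually_ge_atTop 1] with t ht
    exact key_bound G μ hμ0 hμ1 n hn1 I hIindep hx t ht
  linarith
end

section
/- Let H be a finite vertex transitive graph (its automorphism group acts transitively on vertices) with the uniform probability measure. Then for every positive integer n, the maximum fraction of vertices in an independent set of the tensor power H^n equals the independence ratio of H: ᾱ(H^n) = ᾱ(H). -/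
open Finset Filter

lemma aux_count {V : Type*} [Fintype V] [DecidableEq V] (H : SimpleGraph V)
    [Fintype (H ≃g H)] [DecidableEq (H ≃g H)]
    (htrans : ∀ u v : V, ∃ φ : H ≃g H, φ u = v)
    (x w x' w' : V) :
    (Finset.univ.filter (fun g : H ≃g H => g x = w)).card =
    (Finset.univ.filter (fun g : H ≃g H => g x' = w')).card := by
  classical
  obtain ⟨χ, hχ⟩ := htrans x' x
  obtain ⟨ψ, hψ⟩ := htrans w' w
  apply Finset.card_bij' (fun g _ => (χ.trans g).trans ψ.symm)
    (fun g _ => (χ.symm.trans g).trans ψ)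
  · intro g hg
    simp only [mem_filter, mem_univ, true_and] at hg ⊢
    simp [RelIso.trans_apply, hχ, hg, ← hψ]
  · intro g hg
    simp only [mem_filter, mem_univ, true_and] at hg ⊢
    simp [RelIso.trans_apply, ← hχ, hg, hψ]
  · intro g _
    ext v
    simp [RelIso.trans_apply]
  · intro g _
    ext v
    simp [RelIso.trans_apply]

theorem stmt_5 {V : Type*} [Fintype V] [Nonempty V] (H : SimpleGraph V)
    (htrans : ∀ u v : V, ∃ φ : H ≃g H, φ u = v)
    (n : ℕ) (hn : 0 < n) :
    alphaPow H (fun _ => (1 : ℝ) / Fintype.card V) n =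
      alphaBar H (fun _ => (1 : ℝ) / Fintype.card V) := by
  classical
  letI : Fintype (H ≃g H) :=
    Fintype.ofInjective (fun φ : H ≃g H => (φ : V → V)) DFunLike.coe_injective
  have hN : (0:ℝ) < Fintype.card V := by exact_mod_cast Fintype.card_pos
  set N : ℕ := Fintype.card V with hNdef
  set μ : V → ℝ := fun _ => (1:ℝ)/N with hμdef
  set ν : (Fin n → V) → ℝ := fun x => ∏ i, μ (x i) with hνdef
  have hμ1 : ∑ v : V, μ v = 1 := by
    simp only [hμdef, Finset.sum_const, card_univ, nsmul_eq_mul]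
    field_simp
    rfl
  have hμnn : ∀ v, (0:ℝ) ≤ μ v := fun v => by
    simp only [hμdef]; positivity
  have hνnn : ∀ x, (0:ℝ) ≤ ν x := fun x => Finset.prod_nonneg fun i _ => hμnn (x i)
  -- the index 0
  have i0 : Fin n := ⟨0, hn⟩
  -- automorphism counting
  set Γ := H ≃g H with hΓ
  obtain ⟨x0⟩ := ‹Nonempty V›
  set c : ℕ := (Finset.univ.filter (fun g : Γ => g x0 = x0)).card with hcdef
  have hc : ∀ x w : V, (Finset.univ.filter (fun g : Γ => g x = w)).card = c :=
    fun x w => aux_count H htrans x w x0 x0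
  have hΓcard : Fintype.card Γ = N * c := by
    have := Finset.card_eq_sum_card_fiberwise
      (f := fun g : Γ => g x0) (s := Finset.univ) (t := Finset.univ)
      (fun g _ => Finset.mem_univ _)
    rw [Finset.card_univ] at this
    rw [this]
    simp only [hc]
    simp [Finset.sum_const, card_univ, hNdef, mul_comm]
  -- measures as cards
  have hfmeas : ∀ S : Finset V, fmeas μ S = S.card * (1/N) := by
    intro S; simp [fmeas, hμdef, Finset.sum_const, nsmul_eq_mul]
  have hpmeas : ∀ S : Finset (Fin n → V), fmeas ν S = S.card * (1/N)^n := by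
    intro S
    simp [fmeas, hνdef, hμdef, Finset.prod_const, Finset.sum_const, nsmul_eq_mul]
  -- sets
  rw [alphaPow, alphaBar, alphaBar]
  set A := {x : ℝ | ∃ I : Finset (Fin n → V), IsIndepSet (tpow H n) I ∧ x = fmeas ν I} with hA
  set B := {x : ℝ | ∃ I : Finset V, IsIndepSet H I ∧ x = fmeas μ I} with hB
  have hA0 : (0:ℝ) ∈ A := ⟨∅, fun u hu => by simp at hu, by simp [fmeas]⟩
  have hB0 : (0:ℝ) ∈ B := ⟨∅, fun u hu => by simp at hu, by simp [fmeas]⟩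
  have bddA : BddAbove A := by
    refine ⟨1, ?_⟩
    rintro x ⟨J, hJ, rfl⟩
    have h1 : fmeas ν J ≤ fmeas ν Finset.univ :=
      Finset.sum_le_sum_of_subset_of_nonneg (Finset.subset_univ _)
        (fun i _ _ => hνnn i)
    have h2 : fmeas ν (Finset.univ : Finset (Fin n → V)) = 1 := by
      rw [hpmeas, Finset.card_univ, Fintype.card_fun, Fintype.card_fin, ← hNdef]
      push_cast
      rw [← mul_pow, mul_one_div, div_self hN.ne', one_pow]
    exact h2 ▸ h1
  have bddB : BddAbove B := by
    refine ⟨1, ?_⟩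
    rintro x ⟨I, hI, rfl⟩
    calc fmeas μ I ≤ fmeas μ Finset.univ :=
          Finset.sum_le_sum_of_subset_of_nonneg (Finset.subset_univ _)
            (fun i _ _ => hμnn i)
      _ = 1 := hμ1
  -- upper bound: every indep set of the power is dominated
  have upper : ∀ J : Finset (Fin n → V), IsIndepSet (tpow H n) J →
      ∃ I : Finset V, IsIndepSet H I ∧ fmeas ν J ≤ fmeas μ I := by
    intro J hJ
    set Iφ : (Fin n → Γ) → Finset V :=
      fun φ => Finset.univ.filter (fun x => (fun i => φ i x) ∈ J) with hIφ
    have hindep : ∀ φ, IsIndepSet H (Iφ φ) := by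
      intro φ u hu v hv hadj
      simp only [hIφ, Finset.mem_filter] at hu hv
      refine hJ _ hu.2 _ hv.2 ⟨?_, fun i => (φ i).map_rel_iff.mpr hadj⟩
      intro heq
      have := congrFun heq i0
      exact hadj.ne ((φ i0).injective this)
    -- counting (in ℕ)
    have hcount : ∑ φ : Fin n → Γ, (Iφ φ).card = N * (J.card * c ^ n) := by
      have step1 : ∀ x : V,
          (Finset.univ.filter (fun φ : Fin n → Γ => (fun i => φ i x) ∈ J)).card
            = J.card * c ^ n := by
        intro x
        rw [Finset.card_eq_sum_card_fiberwise
          (f := fun φ : Fin n → Γ => (fun i => φ i x)) (t := J)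
          (s := Finset.univ.filter (fun φ : Fin n → Γ => (fun i => φ i x) ∈ J))
          (fun φ hφ => (Finset.mem_filter.mp hφ).2)]
        have : ∀ w ∈ J,
            ((Finset.univ.filter (fun φ : Fin n → Γ => (fun i => φ i x) ∈ J)).filter
              (fun φ => (fun i => φ i x) = w)).card = c ^ n := by
          intro w hw
          have heq : ((Finset.univ.filter (fun φ : Fin n → Γ => (fun i => φ i x) ∈ J)).filter
              (fun φ => (fun i => φ i x) = w))
              = Fintype.piFinset (fun i => Finset.univ.filter (fun g : Γ => g x = w i)) := by
            ext φ
            simp only [Finset.mem_filter, Fintype.mem_piFinset, Finset.mem_univ, true_and,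
              funext_iff]
            constructor
            · rintro ⟨-, h⟩ i; exact h i
            · intro h
              have : (fun i => φ i x) = w := funext h
              exact ⟨this ▸ hw, fun i => h i⟩
          rw [heq, Fintype.card_piFinset]
          simp [hc]
        rw [Finset.sum_congr rfl this, Finset.sum_const, smul_eq_mul]
      calc ∑ φ : Fin n → Γ, (Iφ φ).card
          = ∑ φ : Fin n → Γ, ∑ x : V, (if (fun i => φ i x) ∈ J then 1 else 0) := by
            refine Finset.sum_congr rfl fun φ _ => ?_
            rw [hIφ]
            exact Finset.card_filter _ _
        _ = ∑ x : V, ∑ φ : Fin n → Γ, (if (fun i => φ i x) ∈ J then 1 else 0) :=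
            Finset.sum_comm
        _ = ∑ x : V, (Finset.univ.filter (fun φ : Fin n → Γ => (fun i => φ i x) ∈ J)).card :=
            Finset.sum_congr rfl fun x _ => (Finset.card_filter _ _).symm
        _ = ∑ x : V, J.card * c ^ n := Finset.sum_congr rfl (fun x _ => step1 x)
        _ = N * (J.card * c ^ n) := by
            rw [Finset.sum_const, smul_eq_mul, card_univ]
    -- real sums
    have hsum : ∑ φ : Fin n → Γ, fmeas ν J ≤ ∑ φ : Fin n → Γ, fmeas μ (Iφ φ) := by
      have lhs : ∑ φ : Fin n → Γ, fmeas ν J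
          = (c:ℝ)^n * J.card * ((1/N)^n * (N:ℝ)^n) := by
        rw [Finset.sum_const, card_univ, Fintype.card_fun, Fintype.card_fin, hΓcard,
          nsmul_eq_mul, hpmeas]
        push_cast
        ring
      have rhs : ∑ φ : Fin n → Γ, fmeas μ (Iφ φ)
          = (c:ℝ)^n * J.card * ((N:ℝ) * (1/N)) := by
        have : ∑ φ : Fin n → Γ, fmeas μ (Iφ φ)
            = ((∑ φ : Fin n → Γ, (Iφ φ).card : ℕ) : ℝ) * (1/N) := by
          rw [Nat.cast_sum, Finset.sum_mul]
          exact Finset.sum_congr rfl fun φ _ => hfmeas _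
        rw [this, hcount]
        push_cast
        ring
      rw [lhs, rhs, ← mul_pow, one_div_mul_cancel hN.ne', one_pow,
        mul_one_div_cancel hN.ne']
    obtain ⟨φ, -, hφ⟩ := Finset.exists_le_of_sum_le
      (Finset.univ_nonempty (α := Fin n → Γ)) hsum
    exact ⟨Iφ φ, hindep φ, hφ⟩
  -- lower bound: cylinder sets
  have lower : ∀ I : Finset V, IsIndepSet H I →
      ∃ J : Finset (Fin n → V), IsIndepSet (tpow H n) J ∧ fmeas μ I = fmeas ν J := by
    intro I hI
    set t : Fin n → Finset V := fun i => if i = i0 then I else Finset.univ with ht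
    refine ⟨Fintype.piFinset t, ?_, ?_⟩
    · intro u hu v hv hadj
      rw [Fintype.mem_piFinset] at hu hv
      have hu0 := hu i0
      have hv0 := hv i0
      rw [ht] at hu0 hv0
      simp only [if_pos rfl] at hu0 hv0
      exact hI _ hu0 _ hv0 (hadj.2 i0)
    · have h1 : fmeas ν (Fintype.piFinset t) = ∏ i, ∑ j ∈ t i, μ j := by
        simp only [fmeas, hνdef]
        rw [← Finset.prod_univ_sum]
      rw [h1]
      have h2 : ∀ i : Fin n, ∑ j ∈ t i, μ j = if i = i0 then fmeas μ I else 1 := by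
        intro i
        rw [ht]
        by_cases h : i = i0 <;> simp [h, fmeas, hμ1]
      rw [Finset.prod_congr rfl (fun i _ => h2 i), Finset.prod_ite_eq' Finset.univ i0
        (fun _ => fmeas μ I), if_pos (Finset.mem_univ _)]
  -- conclude
  apply le_antisymm
  · refine csSup_le ⟨0, hA0⟩ ?_
    rintro x ⟨J, hJ, rfl⟩
    obtain ⟨I, hI, hle⟩ := upper J hJ
    exact hle.trans (le_csSup bddB ⟨I, hI, rfl⟩)
  · refine csSup_le ⟨0, hB0⟩ ?_
    rintro x ⟨I, hI, rfl⟩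
    obtain ⟨J, hJ, heq⟩ := lower I hI
    rw [heq]
    exact le_csSup bddA ⟨J, hJ, rfl⟩
end

section
/- Let G be a finite graph with rational probability weights μ. If there is an independent set J in some tensor power G^k with μ^{⊗k}(J) > 1/2, then there exists an independent set I in G itself with μ(I) > μ(N(I)). -/
open Finset Filter

theorem stmt_10 {V : Type*} [Fintype V] (G : SimpleGraph V) (μ : V → ℝ)
    (hμ0 : ∀ v, 0 ≤ μ v) (hμ1 : ∑ v, μ v = 1)
    (hrat : ∀ v, ∃ q : ℚ, μ v = (q : ℝ))
    (k : ℕ) (hk : 1 ≤ k) (J : Finset (Fin k → V))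
    (hJ : IsIndepSet (tpow G k) J) (hJm : 1 / 2 < pmeas μ k J) :
    ∃ I : Finset V, IsIndepSet G I ∧ fmeas μ I > fmeas μ (nbhd G I) := by
  classical
  by_contra hcon
  push_neg at hcon
  -- Step A: Hall condition for all sets
  have hnbhd_mono : ∀ {A B : Finset V}, A ⊆ B → nbhd G A ⊆ nbhd G B := by
    intro A B hAB x hx
    simp only [nbhd, Finset.mem_filter, Finset.mem_univ, true_and] at hx ⊢
    obtain ⟨u, hu, hadj⟩ := hx
    exact ⟨u, hAB hu, hadj⟩
  have hall : ∀ A : Finset V, fmeas μ A ≤ fmeas μ (nbhd G A) := by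
    intro A
    set I : Finset V := A.filter (fun v => v ∉ nbhd G A) with hI
    have hIind : IsIndepSet G I := by
      intro u hu v hv hadj
      rw [hI, Finset.mem_filter] at hu hv
      exact hv.2 (by
        simp only [nbhd, Finset.mem_filter, Finset.mem_univ, true_and]
        exact ⟨u, hu.1, hadj⟩)
    have hdisj : Disjoint (nbhd G I) (A.filter (fun v => v ∈ nbhd G A)) := by
      rw [Finset.disjoint_left]
      intro x hx hx'
      simp only [nbhd, Finset.mem_filter, Finset.mem_univ, true_and] at hx
      obtain ⟨u, hu, hadj⟩ := hx
      rw [hI, Finset.mem_filter] at hu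
      have hxA : x ∈ A := (Finset.mem_filter.mp hx').1
      exact hu.2 (by
        simp only [nbhd, Finset.mem_filter, Finset.mem_univ, true_and]
        exact ⟨x, hxA, hadj.symm⟩)
    have hsub : nbhd G I ∪ A.filter (fun v => v ∈ nbhd G A) ⊆ nbhd G A :=
      Finset.union_subset (hnbhd_mono (Finset.filter_subset _ _))
        (fun x hx => (Finset.mem_filter.mp hx).2)
    have h1 : fmeas μ A = fmeas μ (A.filter (fun v => v ∈ nbhd G A)) + fmeas μ I := by
      unfold fmeas
      rw [hI]
      exact (Finset.sum_filter_add_sum_filter_not A _ μ).symm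
    have h2 : fmeas μ (nbhd G I) + fmeas μ (A.filter (fun v => v ∈ nbhd G A))
        ≤ fmeas μ (nbhd G A) := by
      unfold fmeas
      rw [← Finset.sum_union hdisj]
      exact Finset.sum_le_sum_of_subset_of_nonneg hsub (fun v _ _ => hμ0 v)
    have h3 : fmeas μ I ≤ fmeas μ (nbhd G I) := hcon I hIind
    linarith
  -- Step B: integer weights
  choose q hq using hrat
  have hq0 : ∀ v, 0 ≤ q v := by
    intro v
    have := hμ0 v
    rw [hq v] at this
    exact_mod_cast this
  set D : ℕ := ∏ v, (q v).den with hD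
  have hDpos : 0 < D := Finset.prod_pos (fun v _ => (q v).pos)
  have hden : ∀ v, (q v).den ∣ D := fun v => Finset.dvd_prod_of_mem _ (Finset.mem_univ v)
  set a : V → ℕ := fun v => (q v).num.toNat * (D / (q v).den) with ha
  have hDne : ((D : ℚ)) ≠ 0 := by exact_mod_cast hDpos.ne'
  have haq : ∀ v, (a v : ℚ) = q v * D := by
    intro v
    have hdne : ((q v).den : ℚ) ≠ 0 := by exact_mod_cast (q v).den_nz
    have h1 : ((a v : ℕ) : ℚ) = ((q v).num : ℚ) * (((D / (q v).den : ℕ) : ℕ) : ℚ) := by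
      rw [ha]
      push_cast
      have h0 : (((q v).num.toNat : ℕ) : ℚ) = ((q v).num : ℚ) := by
        exact_mod_cast congrArg (fun z : ℤ => (z : ℚ))
          (Int.toNat_of_nonneg (Rat.num_nonneg.mpr (hq0 v)))
      rw [h0]
    rw [h1, Nat.cast_div (hden v) hdne]
    conv_rhs => rw [← Rat.num_div_den (q v)]
    ring
  have haμ : ∀ v, (a v : ℝ) = μ v * D := by
    intro v
    have h2 : ((a v : ℚ) : ℝ) = ((q v * D : ℚ) : ℝ) := by rw [haq v]
    push_cast at h2
    rw [hq v]
    exact h2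
  have hsum_a : ∑ v, a v = D := by
    have h : ((∑ v, a v : ℕ) : ℝ) = (D : ℝ) := by
      push_cast
      calc ∑ v, (a v : ℝ) = ∑ v, μ v * D := Finset.sum_congr rfl (fun v _ => haμ v)
        _ = (∑ v, μ v) * D := by rw [← Finset.sum_mul]
        _ = D := by rw [hμ1, one_mul]
    exact_mod_cast h
  -- Step C: Hall's theorem application
  set t : (Σ v : V, Fin (a v)) → Finset (Σ v : V, Fin (a v)) :=
    fun x => Finset.univ.filter (fun y => G.Adj x.1 y.1) with ht
  have hHall : ∀ s : Finset (Σ v : V, Fin (a v)), s.card ≤ (s.biUnion t).card := by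
    intro s
    set A : Finset V := s.image Sigma.fst with hA
    have hs_le : s.card ≤ ∑ v ∈ A, a v := by
      have hss : s ⊆ A.sigma (fun v => (Finset.univ : Finset (Fin (a v)))) := by
        intro x hx
        rw [Finset.mem_sigma]
        exact ⟨Finset.mem_image_of_mem _ hx, Finset.mem_univ _⟩
      calc s.card ≤ (A.sigma (fun v => (Finset.univ : Finset (Fin (a v))))).card :=
            Finset.card_le_card hss
        _ = ∑ v ∈ A, a v := by rw [Finset.card_sigma]; simp
    have hbi : s.biUnion t = (nbhd G A).sigma (fun v => (Finset.univ : Finset (Fin (a v)))) := by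
      ext y
      simp only [Finset.mem_biUnion, ht, Finset.mem_filter, Finset.mem_univ, true_and,
        Finset.mem_sigma, nbhd, and_true, hA, Finset.mem_image]
      constructor
      · rintro ⟨x, hx, hadj⟩
        exact ⟨x.1, ⟨x, hx, rfl⟩, hadj⟩
      · rintro ⟨u, ⟨x, hx, rfl⟩, hadj⟩
        exact ⟨x, hx, hadj⟩
    rw [hbi, Finset.card_sigma]
    simp only [Finset.card_univ, Fintype.card_fin]
    refine hs_le.trans ?_
    have hreal := hall A
    unfold fmeas at hreal
    have h : ((∑ v ∈ A, a v : ℕ) : ℝ) ≤ ((∑ v ∈ nbhd G A, a v : ℕ) : ℝ) := by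
      push_cast
      calc ∑ v ∈ A, (a v : ℝ) = ∑ v ∈ A, μ v * D := Finset.sum_congr rfl (fun v _ => haμ v)
        _ = (∑ v ∈ A, μ v) * D := by rw [Finset.sum_mul]
        _ ≤ (∑ v ∈ nbhd G A, μ v) * D :=
            mul_le_mul_of_nonneg_right hreal (by positivity)
        _ = ∑ v ∈ nbhd G A, (a v : ℝ) := by
            rw [Finset.sum_mul]
            exact Finset.sum_congr rfl (fun v _ => (haμ v).symm)
    exact_mod_cast h
  obtain ⟨f, hfinj, hft⟩ := (Finset.all_card_le_biUnion_card_iff_exists_injective t).mp hHall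
  have hfadj : ∀ x : (Σ v : V, Fin (a v)), G.Adj x.1 (f x).1 := by
    intro x
    have := hft x
    rw [ht] at this
    simp only [Finset.mem_filter] at this
    exact this.2
  have hfbij : Function.Bijective f := Finite.injective_iff_bijective.mp hfinj
  -- Step D: the doubly stochastic matrix w
  have hDneR : (D : ℝ) ≠ 0 := by exact_mod_cast hDpos.ne'
  set w : V → V → ℝ := fun u v =>
    ((Finset.univ.filter (fun i : Fin (a u) => (f ⟨u, i⟩).1 = v)).card : ℝ) / D with hw
  have hw0 : ∀ u v, 0 ≤ w u v := by
    intro u v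
    rw [hw]
    positivity
  have hwadj : ∀ u v, w u v ≠ 0 → G.Adj u v := by
    intro u v h
    have hc : (Finset.univ.filter (fun i : Fin (a u) => (f ⟨u, i⟩).1 = v)).card ≠ 0 := by
      intro hc0
      apply h
      rw [hw]
      simp [hc0]
    obtain ⟨i, hi⟩ := Finset.card_pos.mp (Nat.pos_of_ne_zero hc)
    have := (Finset.mem_filter.mp hi).2
    rw [← this]
    exact hfadj ⟨u, i⟩
  have hwrow : ∀ u, ∑ v, w u v = μ u := by
    intro u
    have hcard : ∑ v, ((Finset.univ.filter (fun i : Fin (a u) => (f ⟨u, i⟩).1 = v)).card) = a u := by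
      have h := Finset.card_eq_sum_card_fiberwise
        (s := (Finset.univ : Finset (Fin (a u)))) (t := (Finset.univ : Finset V))
        (f := fun i => (f ⟨u, i⟩).1) (fun x _ => Finset.mem_univ _)
      simpa using h.symm
    calc ∑ v, w u v
        = (∑ v, ((Finset.univ.filter (fun i : Fin (a u) => (f ⟨u, i⟩).1 = v)).card : ℝ)) / D := by
          rw [hw, Finset.sum_div]
      _ = ((a u : ℕ) : ℝ) / D := by rw [← Nat.cast_sum, hcard]
      _ = μ u := by rw [haμ u]; field_simp
  have hwcol : ∀ v, ∑ u, w u v = μ v := by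
    intro v
    have h1 : ∑ u, ((Finset.univ.filter (fun i : Fin (a u) => (f ⟨u, i⟩).1 = v)).card)
        = (Finset.univ.filter (fun x : (Σ v : V, Fin (a v)) => (f x).1 = v)).card := by
      rw [Finset.card_filter]
      rw [← Finset.univ_sigma_univ, Finset.sum_sigma]
      refine Finset.sum_congr rfl (fun u _ => ?_)
      rw [Finset.card_filter]
    have h2 : (Finset.univ.filter (fun x : (Σ v : V, Fin (a v)) => (f x).1 = v)).card
        = (Finset.univ.filter (fun y : (Σ v : V, Fin (a v)) => y.1 = v)).card := by
      apply Finset.card_bij (fun x _ => f x)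
      · intro x hx
        simp only [Finset.mem_filter, Finset.mem_univ, true_and] at hx ⊢
        exact hx
      · intro x _ x' _ h
        exact hfinj h
      · intro y hy
        obtain ⟨x, rfl⟩ := hfbij.2 y
        refine ⟨x, ?_, rfl⟩
        simp only [Finset.mem_filter, Finset.mem_univ, true_and] at hy ⊢
        exact hy
    have h3 : (Finset.univ.filter (fun y : (Σ v : V, Fin (a v)) => y.1 = v)).card = a v := by
      rw [Finset.card_filter]
      rw [← Finset.univ_sigma_univ, Finset.sum_sigma]
      simp [apply_ite Finset.card, Finset.sum_ite_eq']
    calc ∑ u, w u v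
        = (∑ u, ((Finset.univ.filter (fun i : Fin (a u) => (f ⟨u, i⟩).1 = v)).card : ℝ)) / D := by
          rw [hw, Finset.sum_div]
      _ = ((a v : ℕ) : ℝ) / D := by rw [← Nat.cast_sum, h1, h2, h3]
      _ = μ v := by rw [haμ v]; field_simp
  -- Step E: product argument
  set P : (Fin k → V) → (Fin k → V) → ℝ := fun x y => ∏ i, w (x i) (y i) with hP
  have hP0 : ∀ x y, 0 ≤ P x y := fun x y => Finset.prod_nonneg (fun i _ => hw0 _ _)
  have hProw : ∀ x, ∑ y, P x y = ∏ i, μ (x i) := by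
    intro x
    rw [hP]
    rw [← Fintype.prod_sum (f := fun (i : Fin k) (v : V) => w (x i) v)]
    exact Finset.prod_congr rfl (fun i _ => hwrow (x i))
  have hPcol : ∀ y, ∑ x, P x y = ∏ i, μ (y i) := by
    intro y
    rw [hP]
    rw [← Fintype.prod_sum (f := fun (i : Fin k) (v : V) => w v (y i))]
    exact Finset.prod_congr rfl (fun i _ => hwcol (y i))
  have hPJ : ∀ x ∈ J, ∀ y ∈ J, P x y = 0 := by
    intro x hx y hy
    by_contra hne
    have hadj : ∀ i, G.Adj (x i) (y i) := by
      intro i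
      apply hwadj
      intro h0
      exact hne (Finset.prod_eq_zero (Finset.mem_univ i) h0)
    have hxy : x ≠ y := by
      intro h
      rw [h] at hadj
      exact G.irrefl (hadj ⟨0, hk⟩)
    exact hJ x hx y hy ⟨hxy, hadj⟩
  have htot : ∑ x : Fin k → V, ∑ y : Fin k → V, P x y = 1 := by
    calc ∑ x : Fin k → V, ∑ y : Fin k → V, P x y
        = ∑ x : Fin k → V, ∏ i, μ (x i) := Finset.sum_congr rfl (fun x _ => hProw x)
      _ = ∏ _i : Fin k, ∑ v, μ v := (Fintype.prod_sum _).symm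
      _ = 1 := by simp [hμ1]
  have hJ1 : pmeas μ k J = ∑ x ∈ J, ∑ y ∈ Jᶜ, P x y := by
    unfold pmeas
    refine Finset.sum_congr rfl (fun x hx => ?_)
    calc ∏ i, μ (x i) = ∑ y, P x y := (hProw x).symm
      _ = ∑ y ∈ Jᶜ, P x y + ∑ y ∈ J, P x y := (Finset.sum_compl_add_sum J _).symm
      _ = ∑ y ∈ Jᶜ, P x y := by
          rw [Finset.sum_eq_zero (fun y hy => hPJ x hx y hy), add_zero]
  have hJ2 : pmeas μ k J = ∑ x ∈ Jᶜ, ∑ y ∈ J, P x y := by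
    unfold pmeas
    rw [Finset.sum_comm]
    refine Finset.sum_congr rfl (fun y hy => ?_)
    calc ∏ i, μ (y i) = ∑ x, P x y := (hPcol y).symm
      _ = ∑ x ∈ Jᶜ, P x y + ∑ x ∈ J, P x y := (Finset.sum_compl_add_sum J _).symm
      _ = ∑ x ∈ Jᶜ, P x y := by
          rw [Finset.sum_eq_zero (fun x hx => hPJ x hx y hy), add_zero]
  have hfinal : pmeas μ k J + pmeas μ k J ≤ 1 := by
    rw [← htot]
    nth_rewrite 1 [hJ1]
    nth_rewrite 1 [hJ2]
    calc ∑ x ∈ J, ∑ y ∈ Jᶜ, P x y + ∑ x ∈ Jᶜ, ∑ y ∈ J, P x y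
        ≤ ∑ x ∈ J, ∑ y, P x y + ∑ x ∈ Jᶜ, ∑ y, P x y := by
          refine add_le_add (Finset.sum_le_sum (fun x _ => ?_))
            (Finset.sum_le_sum (fun x _ => ?_)) <;>
          exact Finset.sum_le_sum_of_subset_of_nonneg (Finset.subset_univ _)
            (fun y _ _ => hP0 x y)
      _ = ∑ x, ∑ y, P x y := Finset.sum_add_sum_compl J _
  linarith
end

section
/- Let G be a finite graph with probability weights μ such that every independent set I satisfies μ(I) ≤ μ(N(I)). Let G' = G × K_2 with the product measure (K_2 carries the uniform measure 1/2, 1/2), and let (X, Y) be the canonical bipartition of G'. Then in the bipartite graph G', every subset A ⊆ X satisfies μ_{G'}(A) ≤ μ_{G'}(N_{G'}(A)), and every subset B ⊆ Y satisfies μ_{G'}(B) ≤ μ_{G'}(N_{G'}(B)). -/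
open Finset Filter

/-- The tensor product `G × K₂`, realized on the vertex set `V × Bool`. -/
def timesK2 {V : Type*} (G : SimpleGraph V) : SimpleGraph (V × Bool) where
  Adj p q := G.Adj p.1 q.1 ∧ p.2 ≠ q.2
  symm := ⟨fun p q h => ⟨h.1.symm, h.2.symm⟩⟩
  loopless := ⟨fun p h => h.2 rfl⟩

lemma mem_nbhd {V : Type*} [Fintype V] (G : SimpleGraph V) (S : Finset V) (v : V) :
    v ∈ nbhd G S ↔ ∃ u ∈ S, G.Adj u v := by
  simp [nbhd]

lemma key {V : Type*} [Fintype V] (G : SimpleGraph V) (μ : V → ℝ)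
    (hμ0 : ∀ v, 0 ≤ μ v)
    (hI : ∀ I : Finset V, IsIndepSet G I → fmeas μ I ≤ fmeas μ (nbhd G I))
    (S : Finset V) : fmeas μ S ≤ fmeas μ (nbhd G S) := by
  classical
  set I : Finset V := S \ nbhd G S with hIdef
  have hIind : IsIndepSet G I := by
    intro u hu v hv hadj
    have hu' := Finset.mem_sdiff.mp hu
    have hv' := Finset.mem_sdiff.mp hv
    exact hu'.2 ((mem_nbhd G S u).mpr ⟨v, hv'.1, hadj.symm⟩)
  have h1 : fmeas μ I ≤ fmeas μ (nbhd G I) := hI I hIind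
  have h2 : nbhd G I ⊆ nbhd G S \ S := by
    intro v hv
    obtain ⟨u, hu, hadj⟩ := (mem_nbhd G I v).mp hv
    have hu' := Finset.mem_sdiff.mp hu
    refine Finset.mem_sdiff.mpr ⟨(mem_nbhd G S v).mpr ⟨u, hu'.1, hadj⟩, ?_⟩
    intro hvS
    exact hu'.2 ((mem_nbhd G S u).mpr ⟨v, hvS, hadj.symm⟩)
  have hS : fmeas μ S = fmeas μ I + fmeas μ (S ∩ nbhd G S) := by
    unfold fmeas
    rw [hIdef, ← Finset.sdiff_inter_self_left S (nbhd G S)]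
    exact (Finset.sum_sdiff (Finset.inter_subset_left)).symm
  have h3 : fmeas μ (nbhd G I) + fmeas μ (S ∩ nbhd G S) ≤ fmeas μ (nbhd G S) := by
    have hdisj : Disjoint (nbhd G I) (S ∩ nbhd G S) := by
      refine Finset.disjoint_left.mpr fun v hv hv' => ?_
      exact ((Finset.mem_sdiff.mp (h2 hv)).2) (Finset.mem_inter.mp hv').1
    have hsub : nbhd G I ∪ S ∩ nbhd G S ⊆ nbhd G S := by
      refine Finset.union_subset (fun v hv => (Finset.mem_sdiff.mp (h2 hv)).1)
        (fun v hv => (Finset.mem_inter.mp hv).2)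
    calc fmeas μ (nbhd G I) + fmeas μ (S ∩ nbhd G S)
        = fmeas μ (nbhd G I ∪ S ∩ nbhd G S) := (Finset.sum_union hdisj).symm
      _ ≤ fmeas μ (nbhd G S) :=
          Finset.sum_le_sum_of_subset_of_nonneg hsub (fun v _ _ => hμ0 v)
  linarith

lemma half {V : Type*} [Fintype V] (G : SimpleGraph V) (μ : V → ℝ)
    (hμ0 : ∀ v, 0 ≤ μ v)
    (hI : ∀ I : Finset V, IsIndepSet G I → fmeas μ I ≤ fmeas μ (nbhd G I))
    (c : Bool) (A : Finset (V × Bool)) (hA : ∀ p ∈ A, p.2 = c) :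
    fmeas (fun p : V × Bool => μ p.1 / 2) A ≤
      fmeas (fun p : V × Bool => μ p.1 / 2) (nbhd (timesK2 G) A) := by
  classical
  set T : Finset V := A.image Prod.fst with hTdef
  have himg : fmeas (fun p : V × Bool => μ p.1 / 2) A = fmeas μ T / 2 := by
    unfold fmeas
    rw [hTdef, Finset.sum_image (fun p hp q hq h => by
      exact Prod.ext h (by rw [hA p hp, hA q hq]))]
    rw [Finset.sum_div]
  have hnb : nbhd (timesK2 G) A = (nbhd G T) ×ˢ ({!c} : Finset Bool) := by
    ext ⟨z, b⟩
    rw [mem_nbhd, Finset.mem_product, Finset.mem_singleton, mem_nbhd]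
    constructor
    · rintro ⟨p, hpA, hadj, hne⟩
      refine ⟨⟨p.1, Finset.mem_image_of_mem _ hpA, hadj⟩, ?_⟩
      rw [hA p hpA] at hne
      cases b <;> cases c <;> simp_all
    · rintro ⟨⟨w, hwT, hadj⟩, hb⟩
      obtain ⟨p, hpA, hpw⟩ := Finset.mem_image.mp hwT
      refine ⟨p, hpA, by rw [hpw]; exact hadj, ?_⟩
      rw [hA p hpA, hb]
      cases c <;> simp
  have hprod : fmeas (fun p : V × Bool => μ p.1 / 2) ((nbhd G T) ×ˢ ({!c} : Finset Bool))
      = fmeas μ (nbhd G T) / 2 := by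
    unfold fmeas
    rw [Finset.sum_product]
    simp [Finset.sum_div]
  rw [himg, hnb, hprod]
  linarith [key G μ hμ0 hI T]

theorem stmt_11 {V : Type*} [Fintype V] (G : SimpleGraph V) (μ : V → ℝ)
    (hμ0 : ∀ v, 0 ≤ μ v) (hμ1 : ∑ v, μ v = 1)
    (hI : ∀ I : Finset V, IsIndepSet G I → fmeas μ I ≤ fmeas μ (nbhd G I)) :
    (∀ A : Finset (V × Bool), (∀ p ∈ A, p.2 = false) →
      fmeas (fun p : V × Bool => μ p.1 / 2) A ≤
        fmeas (fun p : V × Bool => μ p.1 / 2) (nbhd (timesK2 G) A)) ∧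
    (∀ B : Finset (V × Bool), (∀ p ∈ B, p.2 = true) →
      fmeas (fun p : V × Bool => μ p.1 / 2) B ≤
        fmeas (fun p : V × Bool => μ p.1 / 2) (nbhd (timesK2 G) B)) := by
  exact ⟨fun A hA => half G μ hμ0 hI false A hA, fun B hB => half G μ hμ0 hI true B hB⟩
end

section
/- Let G' be a finite bipartite graph with parts X, Y and nonnegative vertex weights w with w(X) = w(Y) = 1/2, such that every A ⊆ X satisfies w(A) ≤ w(N(A)) and every B ⊆ Y satisfies w(B) ≤ w(N(B)). Then there exists a fractional perfect matching: a function f : E(G') → [0,∞) with ∑_{e ∋ x} f(e) = w(x) for every vertex x of G'. -/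
open Finset Filter

section AugAux
variable {V : Type*} [Fintype V] [DecidableEq V]

lemma interp_nonneg {a b δ t : ℝ} (ha : 0 ≤ a) (h : 0 ≤ a + δ * b) (h1 : 0 ≤ t)
    (h2 : t ≤ δ) : 0 ≤ a + t * b := by
  rcases le_total 0 b with hb | hb
  · nlinarith
  · nlinarith

/-- An "augmenting structure" for `f` with prescribed degree vector `d`. -/
def Aug (G' : SimpleGraph V) (f : V → V → ℝ) (d : V → ℝ) : Prop :=
  ∃ c : V → V → ℝ, (∀ u v, c u v = c v u) ∧ (∀ u v, ¬ G'.Adj u v → c u v = 0) ∧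
    (∃ δ : ℝ, 0 < δ ∧ ∀ u v, 0 ≤ f u v + δ * c u v) ∧
    (∀ u, ∑ v, c u v = d u)

lemma aug_base (G' : SimpleGraph V) (f : V → V → ℝ) (hf0 : ∀ u v, 0 ≤ f u v) (x0 : V) :
    Aug G' f (fun u => (if u = x0 then (1:ℝ) else 0) - (if u = x0 then 1 else 0)) := by
  refine ⟨0, by simp, by simp, ⟨1, one_pos, fun u v => by simpa using hf0 u v⟩, fun u => by simp⟩

lemma aug_step1 {G' : SimpleGraph V} {f : V → V → ℝ} {x0 x y : V} (hadj : G'.Adj x y)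
    (h : Aug G' f (fun u => (if u = x0 then (1:ℝ) else 0) - (if u = x then 1 else 0))) :
    Aug G' f (fun u => (if u = x0 then (1:ℝ) else 0) + (if u = y then 1 else 0)) := by
  obtain ⟨c, hcs, hcsupp, ⟨δ, hδ0, hδ⟩, hcd⟩ := h
  refine ⟨fun u v => c u v + (if u = x ∧ v = y then 1 else 0) + (if u = y ∧ v = x then 1 else 0),
    ?_, ?_, ⟨δ, hδ0, ?_⟩, ?_⟩
  · intro u v
    have A : (if u = x ∧ v = y then (1:ℝ) else 0) = (if v = y ∧ u = x then (1:ℝ) else 0) := by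
      by_cases h : u = x ∧ v = y
      · rw [if_pos h, if_pos ⟨h.2, h.1⟩]
      · rw [if_neg h, if_neg (fun hh => h ⟨hh.2, hh.1⟩)]
    have B : (if u = y ∧ v = x then (1:ℝ) else 0) = (if v = x ∧ u = y then (1:ℝ) else 0) := by
      by_cases h : u = y ∧ v = x
      · rw [if_pos h, if_pos ⟨h.2, h.1⟩]
      · rw [if_neg h, if_neg (fun hh => h ⟨hh.2, hh.1⟩)]
    dsimp only; rw [hcs u v, A, B]; ring
  · intro u v huv
    have h1 : ¬(u = x ∧ v = y) := by rintro ⟨rfl, rfl⟩; exact huv hadj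
    have h2 : ¬(u = y ∧ v = x) := by rintro ⟨rfl, rfl⟩; exact huv hadj.symm
    simp [h1, h2, hcsupp u v huv]
  · intro u v
    dsimp only
    have h1 : (0:ℝ) ≤ (if u = x ∧ v = y then (1:ℝ) else 0) := by positivity
    have h2 : (0:ℝ) ≤ (if u = y ∧ v = x then (1:ℝ) else 0) := by positivity
    nlinarith [hδ u v, mul_nonneg hδ0.le h1, mul_nonneg hδ0.le h2]
  · intro u
    have e1 : ∑ v, (if u = x ∧ v = y then (1:ℝ) else 0) = if u = x then 1 else 0 := by
      by_cases hux : u = x <;> simp [hux]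
    have e2 : ∑ v, (if u = y ∧ v = x then (1:ℝ) else 0) = if u = y then 1 else 0 := by
      by_cases huy : u = y <;> simp [huy]
    have hxy : x ≠ y := hadj.ne
    simp only [Finset.sum_add_distrib, hcd u, e1, e2]
    ring

lemma aug_step2 {G' : SimpleGraph V} {f : V → V → ℝ} {x0 x' y : V}
    (hf0 : ∀ u v, 0 ≤ f u v)
    (hfs : ∀ u v, f u v = f v u) (hfsupp : ∀ u v, ¬ G'.Adj u v → f u v = 0)
    (hpos : 0 < f x' y)
    (h : Aug G' f (fun u => (if u = x0 then (1:ℝ) else 0) + (if u = y then 1 else 0))) :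
    Aug G' f (fun u => (if u = x0 then (1:ℝ) else 0) - (if u = x' then 1 else 0)) := by
  obtain ⟨c, hcs, hcsupp, ⟨δ, hδ0, hδ⟩, hcd⟩ := h
  have hadj : G'.Adj x' y := by
    by_contra hn; exact absurd (hfsupp x' y hn) (ne_of_gt hpos)
  have hne : x' ≠ y := hadj.ne
  set δ' : ℝ := min δ (f x' y / (|c x' y| + 1)) with hδ'def
  have habs : (0:ℝ) < |c x' y| + 1 := by positivity
  have hδ'0 : 0 < δ' := lt_min hδ0 (div_pos hpos habs)
  have hδ'le : δ' ≤ δ := min_le_left _ _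
  have hkey : δ' * (|c x' y| + 1) ≤ f x' y := by
    rw [← le_div_iff₀ habs]; exact min_le_right _ _
  refine ⟨fun u v => c u v - (if u = x' ∧ v = y then 1 else 0) - (if u = y ∧ v = x' then 1 else 0),
    ?_, ?_, ⟨δ', hδ'0, ?_⟩, ?_⟩
  · intro u v
    have A : (if u = x' ∧ v = y then (1:ℝ) else 0) = (if v = y ∧ u = x' then (1:ℝ) else 0) := by
      by_cases h : u = x' ∧ v = y
      · rw [if_pos h, if_pos ⟨h.2, h.1⟩]
      · rw [if_neg h, if_neg (fun hh => h ⟨hh.2, hh.1⟩)]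
    have B : (if u = y ∧ v = x' then (1:ℝ) else 0) = (if v = x' ∧ u = y then (1:ℝ) else 0) := by
      by_cases h : u = y ∧ v = x'
      · rw [if_pos h, if_pos ⟨h.2, h.1⟩]
      · rw [if_neg h, if_neg (fun hh => h ⟨hh.2, hh.1⟩)]
    dsimp only; rw [hcs u v, A, B]; ring
  · intro u v huv
    have h1 : ¬(u = x' ∧ v = y) := by rintro ⟨rfl, rfl⟩; exact huv hadj
    have h2 : ¬(u = y ∧ v = x') := by rintro ⟨rfl, rfl⟩; exact huv hadj.symm
    simp [h1, h2, hcsupp u v huv]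
  · intro u v
    dsimp only
    by_cases h1 : u = x' ∧ v = y
    · obtain ⟨rfl, rfl⟩ := h1
      rw [if_pos ⟨rfl, rfl⟩, if_neg (by rintro ⟨rfl, -⟩; exact hne rfl)]
      have e1 : -(δ' * (|c u v| + 1)) ≤ δ' * (c u v - 1 - 0) := by
        nlinarith [hδ'0.le, neg_abs_le (c u v), abs_nonneg (c u v)]
      linarith [hkey, e1]
    · by_cases h2 : u = y ∧ v = x'
      · obtain ⟨rfl, rfl⟩ := h2
        rw [if_neg (by rintro ⟨rfl, -⟩; exact hne rfl), if_pos ⟨rfl, rfl⟩]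
        have hceq : c v u = c u v := hcs v u
        have hfeq : f u v = f v u := hfs u v
        have e1 : -(δ' * (|c v u| + 1)) ≤ δ' * (c u v - 0 - 1) := by
          nlinarith [hδ'0.le, neg_abs_le (c v u), abs_nonneg (c v u), hceq]
        rw [hfeq]
        linarith [hkey, e1]
      · rw [if_neg h1, if_neg h2]
        simpa using interp_nonneg (hf0 u v) (hδ u v) (le_of_lt hδ'0) hδ'le
  · intro u
    have e1 : ∑ v, (if u = x' ∧ v = y then (1:ℝ) else 0) = if u = x' then 1 else 0 := by
      by_cases hux : u = x' <;> simp [hux]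
    have e2 : ∑ v, (if u = y ∧ v = x' then (1:ℝ) else 0) = if u = y then 1 else 0 := by
      by_cases huy : u = y <;> simp [huy]
    simp only [Finset.sum_sub_distrib, hcd u, e1, e2]
    ring

end AugAux


theorem stmt_12 {V : Type*} [Fintype V] [DecidableEq V] (G' : SimpleGraph V) (w : V → ℝ)
    (hw0 : ∀ v, 0 ≤ w v)
    (X Y : Finset V) (hXY : Disjoint X Y) (hcover : X ∪ Y = Finset.univ)
    (hbip : ∀ u v, G'.Adj u v → (u ∈ X ∧ v ∈ Y) ∨ (u ∈ Y ∧ v ∈ X))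
    (hwX : fmeas w X = 1 / 2) (hwY : fmeas w Y = 1 / 2)
    (hallX : ∀ A : Finset V, A ⊆ X → fmeas w A ≤ fmeas w (nbhd G' A))
    (hallY : ∀ B : Finset V, B ⊆ Y → fmeas w B ≤ fmeas w (nbhd G' B)) :
    ∃ f : V → V → ℝ,
      (∀ u v, 0 ≤ f u v) ∧
      (∀ u v, f u v = f v u) ∧
      (∀ u v, ¬ G'.Adj u v → f u v = 0) ∧
      (∀ v, ∑ u, f v u = w v) := by
  classical
  -- the feasible set
  set K : Set (V → V → ℝ) := {f | (∀ u v, 0 ≤ f u v) ∧ (∀ u v, f u v = f v u) ∧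
    (∀ u v, ¬ G'.Adj u v → f u v = 0) ∧ (∀ v, ∑ u, f v u ≤ w v)} with hKdef
  have h0K : (0 : V → V → ℝ) ∈ K :=
    ⟨fun _ _ => le_refl 0, fun _ _ => rfl, fun _ _ _ => rfl, fun v => by simpa using hw0 v⟩
  set val : (V → V → ℝ) → ℝ := fun f => ∑ x ∈ X, ∑ u, f x u with hval
  have hvalc : Continuous val := by
    apply continuous_finset_sum; intro x _; apply continuous_finset_sum; intro u _
    exact (continuous_apply u).comp (continuous_apply x)
  set M : ℝ := ∑ v, w v with hM
  have hKsub : K ⊆ Set.Icc 0 (fun _ _ => M) := by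
    rintro f ⟨h0, hs, hsupp, hdeg⟩
    refine ⟨fun u => fun v => h0 u v, fun u => fun v => ?_⟩
    calc f u v ≤ ∑ v', f u v' := Finset.single_le_sum (fun i _ => h0 u i) (mem_univ v)
    _ ≤ w u := hdeg u
    _ ≤ M := Finset.single_le_sum (fun i _ => hw0 i) (mem_univ u)
  have hKclosed : IsClosed K := by
    have h1 : IsClosed {f : V → V → ℝ | ∀ u v, 0 ≤ f u v} := by
      have : {f : V → V → ℝ | ∀ u v, 0 ≤ f u v} = ⋂ u, ⋂ v, {f | 0 ≤ f u v} := by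
        ext f; simp
      rw [this]
      exact isClosed_iInter fun u => isClosed_iInter fun v =>
        isClosed_le continuous_const ((continuous_apply v).comp (continuous_apply u))
    have h2 : IsClosed {f : V → V → ℝ | ∀ u v, f u v = f v u} := by
      have : {f : V → V → ℝ | ∀ u v, f u v = f v u} = ⋂ u, ⋂ v, {f | f u v = f v u} := by
        ext f; simp
      rw [this]
      exact isClosed_iInter fun u => isClosed_iInter fun v =>
        isClosed_eq ((continuous_apply v).comp (continuous_apply u))
          ((continuous_apply u).comp (continuous_apply v))
    have h3 : IsClosed {f : V → V → ℝ | ∀ u v, ¬ G'.Adj u v → f u v = 0} := by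
      have : {f : V → V → ℝ | ∀ u v, ¬ G'.Adj u v → f u v = 0} =
          ⋂ u, ⋂ v, {f | ¬ G'.Adj u v → f u v = 0} := by ext f; simp
      rw [this]
      refine isClosed_iInter fun u => isClosed_iInter fun v => ?_
      by_cases h : G'.Adj u v
      · have : {f : V → V → ℝ | ¬ G'.Adj u v → f u v = 0} = Set.univ := by ext f; simp [h]
        rw [this]; exact isClosed_univ
      · have : {f : V → V → ℝ | ¬ G'.Adj u v → f u v = 0} = {f | f u v = 0} := by
          ext f; simp [h]
        rw [this]
        exact isClosed_eq ((continuous_apply v).comp (continuous_apply u)) continuous_const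
    have h4 : IsClosed {f : V → V → ℝ | ∀ v, ∑ u, f v u ≤ w v} := by
      have : {f : V → V → ℝ | ∀ v, ∑ u, f v u ≤ w v} = ⋂ v, {f | ∑ u, f v u ≤ w v} := by
        ext f; simp
      rw [this]
      refine isClosed_iInter fun v => isClosed_le ?_ continuous_const
      exact continuous_finset_sum _ fun u _ => (continuous_apply u).comp (continuous_apply v)
    have : K = {f : V → V → ℝ | ∀ u v, 0 ≤ f u v} ∩ ({f | ∀ u v, f u v = f v u} ∩
        ({f | ∀ u v, ¬ G'.Adj u v → f u v = 0} ∩ {f | ∀ v, ∑ u, f v u ≤ w v})) := by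
      ext f; simp only [hKdef, Set.mem_setOf_eq, Set.mem_inter_iff]
    rw [this]
    exact h1.inter (h2.inter (h3.inter h4))
  have hKcompact : IsCompact K := (isCompact_Icc).of_isClosed_subset hKclosed hKsub
  obtain ⟨f, hfK, hfmax⟩ := hKcompact.exists_isMaxOn ⟨0, h0K⟩ hvalc.continuousOn
  obtain ⟨hf0, hfs, hfsupp, hfdeg⟩ := hfK
  have hXsat : ∀ x ∈ X, ∑ u, f x u = w x := by
    by_contra hx
    push_neg at hx
    obtain ⟨x0, hx0X, hx0⟩ := hx
    have hx0lt : ∑ u, f x0 u < w x0 := lt_of_le_of_ne (hfdeg x0) hx0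
    -- every reachable y ∈ Y is saturated
    have hsatY : ∀ y ∈ Y,
        Aug G' f (fun u => (if u = x0 then (1:ℝ) else 0) + (if u = y then 1 else 0)) →
        ∑ u, f y u = w y := by
      intro y hy haug
      by_contra hyne
      have hylt : ∑ u, f y u < w y := lt_of_le_of_ne (hfdeg y) hyne
      have hx0y : x0 ≠ y := fun h => (Finset.disjoint_left.mp hXY hx0X) (h ▸ hy)
      obtain ⟨c, hcs, hcsupp, ⟨δ, hδ0, hδ⟩, hcd⟩ := haug
      set ε := min δ (min (w x0 - ∑ u, f x0 u) (w y - ∑ u, f y u)) with hε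
      have hε0 : 0 < ε := lt_min hδ0 (lt_min (by linarith) (by linarith))
      have hεδ : ε ≤ δ := min_le_left _ _
      have hεx0 : ε ≤ w x0 - ∑ u, f x0 u := le_trans (min_le_right _ _) (min_le_left _ _)
      have hεy : ε ≤ w y - ∑ u, f y u := le_trans (min_le_right _ _) (min_le_right _ _)
      set g : V → V → ℝ := fun u v => f u v + ε * c u v with hg
      have hgdeg : ∀ v, ∑ u, g v u =
          (∑ u, f v u) + ε * ((if v = x0 then 1 else 0) + (if v = y then 1 else 0)) := by
        intro v
        simp only [hg]
        rw [Finset.sum_add_distrib, ← Finset.mul_sum, hcd v]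
      have hgK : g ∈ K := by
        refine ⟨fun u v => interp_nonneg (hf0 u v) (hδ u v) hε0.le hεδ,
          fun u v => by simp only [hg]; rw [hfs u v, hcs u v],
          fun u v h => by simp only [hg]; rw [hfsupp u v h, hcsupp u v h]; ring, fun v => ?_⟩
        rw [hgdeg v]
        by_cases hv1 : v = x0
        · subst hv1
          rw [if_pos rfl, if_neg hx0y]
          linarith
        · by_cases hv2 : v = y
          · subst hv2
            rw [if_neg hv1, if_pos rfl]
            linarith
          · rw [if_neg hv1, if_neg hv2]
            simpa using hfdeg v
      have hle : val g ≤ val f := hfmax hgK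
      have heq : val g = val f + ε := by
        simp only [hval]
        rw [Finset.sum_congr rfl (fun x _ => hgdeg x), Finset.sum_add_distrib,
          ← Finset.mul_sum, Finset.sum_add_distrib]
        rw [Finset.sum_ite_eq' X x0 (fun _ => (1:ℝ)), Finset.sum_ite_eq' X y (fun _ => (1:ℝ)),
          if_pos hx0X, if_neg (fun hyX => (Finset.disjoint_left.mp hXY hyX) hy)]
        ring
      linarith
    -- the Hall-violating set
    set A : Finset V := X.filter
      (fun x => Aug G' f (fun u => (if u = x0 then (1:ℝ) else 0) - (if u = x then 1 else 0)))
      with hA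
    set B : Finset V := Y.filter
      (fun y => Aug G' f (fun u => (if u = x0 then (1:ℝ) else 0) + (if u = y then 1 else 0)))
      with hB
    have hx0A : x0 ∈ A := mem_filter.mpr ⟨hx0X, aug_base G' f hf0 x0⟩
    have hAX : A ⊆ X := filter_subset _ _
    have hstep : ∀ x ∈ A, ∀ v, G'.Adj x v → v ∈ B := by
      intro x hx v hadj
      obtain ⟨hxX, hxa⟩ := mem_filter.mp hx
      have hvY : v ∈ Y := by
        rcases hbip x v hadj with ⟨-, h⟩ | ⟨h, -⟩
        · exact h
        · exact absurd hxX (Finset.disjoint_right.mp hXY h)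
      exact mem_filter.mpr ⟨hvY, aug_step1 hadj hxa⟩
    have hback : ∀ y ∈ B, ∀ u, 0 < f u y → u ∈ A := by
      intro y hy u hpos
      obtain ⟨hyY, hya⟩ := mem_filter.mp hy
      have hadj : G'.Adj u y := by
        by_contra hn; exact absurd (hfsupp u y hn) (ne_of_gt hpos)
      have huX : u ∈ X := by
        rcases hbip u y hadj with ⟨h, -⟩ | ⟨-, h⟩
        · exact h
        · exact absurd hyY (Finset.disjoint_left.mp hXY h)
      exact mem_filter.mpr ⟨huX, aug_step2 hf0 hfs hfsupp hpos hya⟩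
    have hBsat : ∀ y ∈ B, ∑ u, f y u = w y := fun y hy =>
      hsatY y (mem_filter.mp hy).1 (mem_filter.mp hy).2
    have e1 : fmeas w B = ∑ y ∈ B, ∑ u ∈ A, f y u := by
      unfold fmeas
      refine Finset.sum_congr rfl fun y hy => ?_
      rw [← hBsat y hy]
      refine (Finset.sum_subset (Finset.subset_univ A) fun u _ huA => ?_).symm
      by_contra hne
      have hpos : 0 < f y u := lt_of_le_of_ne (hf0 y u) (Ne.symm hne)
      have : 0 < f u y := by rw [hfs u y]; exact hpos
      exact huA (hback y hy u this)
    have e2 : ∑ y ∈ B, ∑ u ∈ A, f y u = ∑ x ∈ A, ∑ u, f x u := by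
      rw [Finset.sum_comm]
      refine Finset.sum_congr rfl fun x hx => ?_
      have : ∀ y, f y x = f x y := fun y => hfs y x
      rw [Finset.sum_congr rfl fun y _ => this y]
      refine Finset.sum_subset (Finset.subset_univ B) fun v _ hvB => ?_
      by_contra hne
      have hpos : 0 < f x v := lt_of_le_of_ne (hf0 x v) (Ne.symm hne)
      have hadj : G'.Adj x v := by
        by_contra hn; exact absurd (hfsupp x v hn) (ne_of_gt hpos)
      exact hvB (hstep x hx v hadj)
    have e3 : ∑ x ∈ A, ∑ u, f x u < fmeas w A :=
      Finset.sum_lt_sum (fun x _ => hfdeg x) ⟨x0, hx0A, hx0lt⟩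
    have e4 : fmeas w A ≤ fmeas w (nbhd G' A) := hallX A hAX
    have e5 : nbhd G' A ⊆ B := by
      intro v hv
      simp only [nbhd, Finset.mem_filter] at hv
      obtain ⟨-, u, hu, hadj⟩ := hv
      exact hstep u hu v hadj
    have e6 : fmeas w (nbhd G' A) ≤ fmeas w B :=
      Finset.sum_le_sum_of_subset_of_nonneg e5 fun i _ _ => hw0 i
    linarith [e1, e2, e3, e4, e6]
  -- conclude: Y side saturated as well
  refine ⟨f, hf0, hfs, hfsupp, ?_⟩
  have hXval : ∑ x ∈ X, ∑ u, f x u = 1 / 2 := by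
    rw [Finset.sum_congr rfl hXsat]; exact hwX
  have hswap : ∑ y ∈ Y, ∑ u, f y u = ∑ x ∈ X, ∑ u, f x u := by
    have eY : ∀ y ∈ Y, ∑ u, f y u = ∑ u ∈ X, f y u := by
      intro y hy
      refine (Finset.sum_subset (Finset.subset_univ X) fun u _ huX => ?_).symm
      by_contra hne
      have hpos : 0 < f y u := lt_of_le_of_ne (hf0 y u) (Ne.symm hne)
      have hadj : G'.Adj y u := by
        by_contra hn; exact absurd (hfsupp y u hn) (ne_of_gt hpos)
      rcases hbip y u hadj with ⟨h, -⟩ | ⟨-, h⟩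
      · exact (Finset.disjoint_right.mp hXY hy) h
      · exact huX h
    have eX : ∀ x ∈ X, ∑ u, f x u = ∑ u ∈ Y, f x u := by
      intro x hx
      refine (Finset.sum_subset (Finset.subset_univ Y) fun u _ huY => ?_).symm
      by_contra hne
      have hpos : 0 < f x u := lt_of_le_of_ne (hf0 x u) (Ne.symm hne)
      have hadj : G'.Adj x u := by
        by_contra hn; exact absurd (hfsupp x u hn) (ne_of_gt hpos)
      rcases hbip x u hadj with ⟨-, h⟩ | ⟨h, -⟩
      · exact huY h
      · exact (Finset.disjoint_left.mp hXY hx) h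
    calc ∑ y ∈ Y, ∑ u, f y u = ∑ y ∈ Y, ∑ u ∈ X, f y u := Finset.sum_congr rfl eY
      _ = ∑ u ∈ X, ∑ y ∈ Y, f y u := Finset.sum_comm
      _ = ∑ u ∈ X, ∑ y ∈ Y, f u y :=
          Finset.sum_congr rfl fun u _ => Finset.sum_congr rfl fun y _ => hfs y u
      _ = ∑ x ∈ X, ∑ u, f x u := (Finset.sum_congr rfl eX).symm
  have hYsum : ∑ y ∈ Y, ∑ u, f y u = ∑ y ∈ Y, w y := by
    rw [hswap, hXval]; exact hwY.symm
  have hYsat : ∀ y ∈ Y, ∑ u, f y u = w y :=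
    (Finset.sum_eq_sum_iff_of_le (fun y _ => hfdeg y)).mp hYsum
  intro v
  have hv := Finset.mem_univ v
  rw [← hcover, Finset.mem_union] at hv
  rcases hv with h | h
  · exact hXsat v h
  · exact hYsat v h
end

section
/- Let G be a finite graph with probability weights μ and suppose G admits a fractional perfect matching between the two sides of G × K_2 (equivalently, a function f : E(G) → [0,∞) with ∑_{e ∋ v} f(e) = μ(v) for all v, where loops are allowed only if vv ∈ E(G)). Then every independent set I of G satisfies μ(I) ≤ μ(N(I)), and hence ᾱ(G^n) does not converge to 1. -/
open Finset Filter

lemma indep_meas_le {V : Type*} [Fintype V] (G : SimpleGraph V) (μ : V → ℝ)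
    (f : V → V → ℝ) (hf0 : ∀ u v, 0 ≤ f u v) (hfsymm : ∀ u v, f u v = f v u)
    (hfsupp : ∀ u v, ¬ G.Adj u v → f u v = 0) (hfdeg : ∀ v, ∑ u, f v u = μ v)
    (I : Finset V) (hI : IsIndepSet G I) : fmeas μ I ≤ fmeas μ (nbhd G I) := by
  classical
  have h1 : fmeas μ I = ∑ v ∈ I, ∑ u ∈ nbhd G I, f v u := by
    unfold fmeas
    refine Finset.sum_congr rfl fun v hv => ?_
    rw [← hfdeg v]
    refine (Finset.sum_subset (Finset.subset_univ _) ?_).symm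
    intro u _ hu
    by_contra h
    apply hu
    unfold nbhd
    simp only [Finset.mem_filter, Finset.mem_univ, true_and]
    exact ⟨v, hv, by by_contra hadj; exact h (hfsupp v u hadj)⟩
  rw [h1, Finset.sum_comm]
  unfold fmeas
  refine Finset.sum_le_sum fun u _ => ?_
  calc ∑ v ∈ I, f v u ≤ ∑ v, f v u :=
        Finset.sum_le_sum_of_subset_of_nonneg (Finset.subset_univ _) (fun v _ _ => hf0 v u)
    _ = ∑ v, f u v := Finset.sum_congr rfl fun v _ => hfsymm v u
    _ = μ u := hfdeg u

theorem stmt_13 {V : Type*} [Fintype V] (G : SimpleGraph V) (μ : V → ℝ)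
    (hμ0 : ∀ v, 0 ≤ μ v) (hμ1 : ∑ v, μ v = 1)
    (f : V → V → ℝ)
    (hf0 : ∀ u v, 0 ≤ f u v)
    (hfsymm : ∀ u v, f u v = f v u)
    (hfsupp : ∀ u v, ¬ G.Adj u v → f u v = 0)
    (hfdeg : ∀ v, ∑ u, f v u = μ v) :
    (∀ I : Finset V, IsIndepSet G I → fmeas μ I ≤ fmeas μ (nbhd G I)) ∧
    ¬ Tendsto (fun n => alphaPow G μ n) atTop (nhds 1) := by
  classical
  refine ⟨fun I hI => indep_meas_le G μ f hf0 hfsymm hfsupp hfdeg I hI, ?_⟩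
  have hbound : ∀ n : ℕ, 0 < n → alphaPow G μ n ≤ 1/2 := by
    intro n hn
    set μn : (Fin n → V) → ℝ := fun x => ∏ i, μ (x i) with hμndef
    have hμn0 : ∀ x, 0 ≤ μn x := fun x => Finset.prod_nonneg fun i _ => hμ0 _
    set F : (Fin n → V) → (Fin n → V) → ℝ := fun x y => ∏ i, f (x i) (y i) with hFdef
    have hFdeg : ∀ x, ∑ y, F x y = μn x := by
      intro x
      calc ∑ y : Fin n → V, ∏ i, f (x i) (y i)
          = ∑ y ∈ Fintype.piFinset (fun _ : Fin n => (Finset.univ : Finset V)),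
              ∏ i, f (x i) (y i) := by rw [Fintype.piFinset_univ]
        _ = ∏ i, ∑ u, f (x i) u := (Finset.prod_univ_sum _ _).symm
        _ = ∏ i, μ (x i) := Finset.prod_congr rfl fun i _ => hfdeg _
    have hkey : ∀ I, IsIndepSet (tpow G n) I →
        fmeas μn I ≤ fmeas μn (nbhd (tpow G n) I) := by
      intro I hI
      refine indep_meas_le (tpow G n) μn F ?_ ?_ ?_ hFdeg I hI
      · intro u v; exact Finset.prod_nonneg fun i _ => hf0 _ _
      · intro u v; exact Finset.prod_congr rfl fun i _ => hfsymm _ _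
      · intro u v h
        by_cases huv : u = v
        · subst huv
          exact Finset.prod_eq_zero (Finset.mem_univ (⟨0, hn⟩ : Fin n))
            (hfsupp _ _ (G.loopless.irrefl _))
        · have : ¬ ∀ i, G.Adj (u i) (v i) := fun hall => h (show u ≠ v ∧ ∀ i, G.Adj (u i) (v i) from ⟨huv, hall⟩)
          obtain ⟨i, hi⟩ := not_forall.mp this
          exact Finset.prod_eq_zero (Finset.mem_univ i) (hfsupp _ _ hi)
    have htot : fmeas μn Finset.univ = 1 := by
      calc fmeas μn Finset.univ
          = ∑ y ∈ Fintype.piFinset (fun _ : Fin n => (Finset.univ : Finset V)),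
              ∏ i, μ (y i) := by rw [Fintype.piFinset_univ]; rfl
        _ = ∏ _i : Fin n, ∑ u, μ u := (Finset.prod_univ_sum _ _).symm
        _ = 1 := by rw [hμ1]; simp
    have hhalf : ∀ I : Finset (Fin n → V), IsIndepSet (tpow G n) I → fmeas μn I ≤ 1/2 := by
      intro I hI
      have hdisj : Disjoint I (nbhd (tpow G n) I) := by
        rw [Finset.disjoint_left]
        intro u hu hnu
        unfold nbhd at hnu
        simp only [Finset.mem_filter, Finset.mem_univ, true_and] at hnu
        obtain ⟨v, hv, hadj⟩ := hnu
        exact hI v hv u hu hadj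
      have hsum : fmeas μn I + fmeas μn (nbhd (tpow G n) I) ≤ 1 := by
        rw [← htot]
        unfold fmeas
        rw [← Finset.sum_union hdisj]
        exact Finset.sum_le_sum_of_subset_of_nonneg (Finset.subset_univ _)
          (fun x _ _ => hμn0 x)
      linarith [hkey I hI]
    refine Real.sSup_le ?_ (by norm_num)
    rintro x ⟨I, hI, rfl⟩
    exact hhalf I hI
  intro htend
  have h1 : ∀ᶠ n in atTop, 1/2 < alphaPow G μ n :=
    htend.eventually (eventually_gt_nhds (by norm_num))
  obtain ⟨n, hn1, hn2⟩ := (h1.and (eventually_gt_atTop 0)).exists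
  exact absurd (hbound n hn2) (not_le.mpr hn1)
end

section
/- Let G be a finite graph with probability weights μ, let I be an independent set of G, and let U = V(G) \ (I ∪ N(I)). For any independent set J of G^{n-1}, the set K = (I × V(G)^{n-1}) ∪ (U × J) is an independent set of G^n, and μ^{⊗n}(K) = μ(I) + μ(U)·μ^{⊗(n-1)}(J). -/
open Finset Filter

theorem stmt_17 {V : Type*} [Fintype V] [DecidableEq V] (G : SimpleGraph V) (μ : V → ℝ)
    (hμ0 : ∀ v, 0 ≤ μ v) (hμ1 : ∑ v, μ v = 1)
    (I : Finset V) (hI : IsIndepSet G I)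
    (m : ℕ) (hm : 1 ≤ m)
    (J : Finset (Fin m → V)) (hJ : IsIndepSet (tpow G m) J) :
    IsIndepSet (tpow G (m + 1))
      (@Finset.filter _ (fun x : Fin (m + 1) → V =>
          x 0 ∈ I ∨
            (x 0 ∈ Finset.univ \ (I ∪ nbhd G I) ∧ (fun i : Fin m => x i.succ) ∈ J))
        (Classical.decPred _) Finset.univ) ∧
    pmeas μ (m + 1)
      (@Finset.filter _ (fun x : Fin (m + 1) → V =>
          x 0 ∈ I ∨
            (x 0 ∈ Finset.univ \ (I ∪ nbhd G I) ∧ (fun i : Fin m => x i.succ) ∈ J))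
        (Classical.decPred _) Finset.univ)
      = fmeas μ I + fmeas μ (Finset.univ \ (I ∪ nbhd G I)) * pmeas μ m J := by
  classical
  set U : Finset V := Finset.univ \ (I ∪ nbhd G I) with hU
  have hUI : ∀ v ∈ U, v ∉ I ∧ v ∉ nbhd G I := by
    intro v hv
    simp only [hU, Finset.mem_sdiff, Finset.mem_union] at hv
    exact ⟨fun h => hv.2 (Or.inl h), fun h => hv.2 (Or.inr h)⟩
  constructor
  · intro x hx y hy hadj
    simp only [Finset.mem_filter] at hx hy
    obtain ⟨x0adj⟩ : ∃ _ : G.Adj (x 0) (y 0), True := ⟨hadj.2 0, trivial⟩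
    rcases hx.2 with hxI | ⟨hxU, hxJ⟩ <;> rcases hy.2 with hyI | ⟨hyU, hyJ⟩
    · exact hI _ hxI _ hyI x0adj
    · exact (hUI _ hyU).2 (by
        simp only [nbhd, Finset.mem_filter, Finset.mem_univ, true_and]
        exact ⟨x 0, hxI, x0adj⟩)
    · exact (hUI _ hxU).2 (by
        simp only [nbhd, Finset.mem_filter, Finset.mem_univ, true_and]
        exact ⟨y 0, hyI, x0adj.symm⟩)
    · refine hJ _ hxJ _ hyJ ⟨?_, fun i => hadj.2 i.succ⟩
      intro h
      have i0 : Fin m := ⟨0, hm⟩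
      have := hadj.2 (Fin.succ ⟨0, hm⟩)
      have heq : x (Fin.succ ⟨0, hm⟩) = y (Fin.succ ⟨0, hm⟩) := congrFun h ⟨0, hm⟩
      rw [heq] at this
      exact G.loopless.irrefl _ this
  · have key : ∀ x : Fin (m + 1) → V, ∏ i, μ (x i) = μ (x 0) * ∏ i : Fin m, μ (x i.succ) :=
      fun x => Fin.prod_univ_succ _
    -- transfer sum to product type via Fin.cons equivalence
    have hbij : pmeas μ (m + 1)
        (@Finset.filter _ (fun x : Fin (m + 1) → V =>
          x 0 ∈ I ∨ (x 0 ∈ U ∧ (fun i : Fin m => x i.succ) ∈ J))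
        (Classical.decPred _) Finset.univ)
        = ∑ p ∈ (I ×ˢ (Finset.univ : Finset (Fin m → V))) ∪ U ×ˢ J,
            μ p.1 * ∏ i : Fin m, μ (p.2 i) := by
      unfold pmeas
      refine Finset.sum_nbij' (fun x => (x 0, fun i : Fin m => x i.succ))
        (fun p => Fin.cons p.1 p.2) ?_ ?_ ?_ ?_ ?_
      · intro x hx
        simp only [Finset.mem_filter] at hx
        simp only [Finset.mem_union, Finset.mem_product, Finset.mem_univ, and_true]
        rcases hx.2 with h | h
        · exact Or.inl h
        · exact Or.inr h
      · intro p hp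
        simp only [Finset.mem_union, Finset.mem_product, Finset.mem_univ, and_true] at hp
        simp only [Finset.mem_filter, Finset.mem_univ, true_and]
        rcases hp with h | h
        · exact Or.inl (by simpa using h)
        · refine Or.inr ⟨by simpa using h.1, ?_⟩
          have : (fun i : Fin m => Fin.cons (α := fun _ => V) p.1 p.2 i.succ) = p.2 := by
            funext i; exact Fin.cons_succ (α := fun _ => V) p.1 p.2 i
          rw [this]; exact h.2
      · intro x _
        funext i
        exact Fin.cases rfl (fun j => rfl) i
      · intro p _
        simp
      · intro x _
        rw [key x]
    rw [hbij, Finset.sum_union]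
    · have h1 : ∑ p ∈ I ×ˢ (Finset.univ : Finset (Fin m → V)),
          μ p.1 * ∏ i : Fin m, μ (p.2 i) = fmeas μ I := by
        rw [Finset.sum_product]
        have ht : ∑ t : Fin m → V, ∏ i : Fin m, μ (t i) = 1 := by
          rw [← Fintype.sum_pow μ m, hμ1, one_pow]
        unfold fmeas
        refine Finset.sum_congr rfl fun v _ => ?_
        dsimp only
        rw [← Finset.mul_sum, ht, mul_one]
      have h2 : ∑ p ∈ U ×ˢ J, μ p.1 * ∏ i : Fin m, μ (p.2 i)
          = fmeas μ U * pmeas μ m J := by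
        rw [Finset.sum_product, fmeas, pmeas, Finset.sum_mul]
        exact Finset.sum_congr rfl fun v _ => by dsimp only; rw [Finset.mul_sum]
      rw [h1, h2]
    · rw [Finset.disjoint_left]
      intro p hp hp'
      simp only [Finset.mem_product, Finset.mem_univ, and_true] at hp hp'
      exact (hUI _ hp'.1).1 hp
end
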